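/- arXiv:2412.17622 — 5 statements merged into one kernel-verified Lean document; each statement's English description precedes it below -/
import Mathlib

section
/- Fix a probability vector α and sample-size vector (n_1,…,n_m) with each n_i ≥ 1. Let x = (x_{i,a})_{i ∈ [m], a ∈ [n_i]} be any points in X, and let x̃ be identical to x except that one entry x_{i,a} is changed to x̃_{i,a} ∈ X. Then |L̂(α; x̃) − L̂(α; x)| ≤ (α_i / n_i) Δ_L. -/
open Finset

noncomputable section

/-- Empirical kernel matrix `K̂(x)_{ij} = (1/(n_i n_j)) ∑_a ∑_b κ(x_{i,a}, x_{j,b})`. -/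
def Khat {X : Type*} (κ : X → X → ℝ) {m : ℕ} (n : Fin m → ℕ)
    (x : (i : Fin m) → Fin (n i) → X) (i j : Fin m) : ℝ :=
  (1 / ((n i : ℝ) * (n j : ℝ))) * ∑ a, ∑ b, κ (x i a) (x j b)

/-- Empirical mean vector `f̂(x)_i = (1/n_i) ∑_a f(x_{i,a})`. -/
def fhat {X : Type*} (f : X → ℝ) {m : ℕ} (n : Fin m → ℕ)
    (x : (i : Fin m) → Fin (n i) → X) (i : Fin m) : ℝ :=
  (1 / (n i : ℝ)) * ∑ a, f (x i a)

/-- Sample loss `L̂(α; x) = αᵀ K̂(x) α + f̂(x)ᵀ α`. -/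
def Lhat {X : Type*} (κ : X → X → ℝ) (f : X → ℝ) {m : ℕ} (n : Fin m → ℕ)
    (α : Fin m → ℝ) (x : (i : Fin m) → Fin (n i) → X) : ℝ :=
  ∑ i, ∑ j, α i * α j * Khat κ n x i j + ∑ i, α i * fhat f n x i

/-- Bounded-difference property of the sample loss: changing one sample `x_{i,a}` of arm `i`
changes `L̂(α; ·)` by at most `(α_i / n_i) Δ_L`, where `Δ_L = 2Δ_κ + Δ_f`. -/
theorem lhat_bounded_difference
    {X : Type*} {m : ℕ}
    (κ : X → X → ℝ) (f : X → ℝ)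
    (κ0 κ1 f0 f1 : ℝ)
    (hκbdd : ∀ x y, κ x y ∈ Set.Icc κ0 κ1) (hfbdd : ∀ y, f y ∈ Set.Icc f0 f1)
    (hκsymm : ∀ x y, κ x y = κ y x)
    (n : Fin m → ℕ) (hn : ∀ i, 1 ≤ n i)
    (α : Fin m → ℝ) (hα : α ∈ stdSimplex ℝ (Fin m))
    (x xt : (i : Fin m) → Fin (n i) → X)
    (i : Fin m) (a : Fin (n i))
    (hsame : ∀ (j : Fin m) (b : Fin (n j)),
      (⟨j, b⟩ : Σ j : Fin m, Fin (n j)) ≠ ⟨i, a⟩ → xt j b = x j b) :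
    |Lhat κ f n α xt - Lhat κ f n α x| ≤ (α i / (n i : ℝ)) * (2 * (κ1 - κ0) + (f1 - f0)) := by
  obtain ⟨hα0, hα1⟩ := hα
  have hNpos : (0:ℝ) < (n i : ℝ) := by
    have := hn i; positivity
  have hc0 : (0:ℝ) ≤ κ1 - κ0 := by
    have h := hκbdd (x i a) (x i a); simp only [Set.mem_Icc] at h; linarith
  have hf0' : (0:ℝ) ≤ f1 - f0 := by
    have h := hfbdd (x i a); simp only [Set.mem_Icc] at h; linarith
  have hκd : ∀ w z w' z', |κ w z - κ w' z'| ≤ κ1 - κ0 := by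
    intro w z w' z'
    have h1 := hκbdd w z; have h2 := hκbdd w' z'
    simp only [Set.mem_Icc] at h1 h2
    rw [abs_sub_le_iff]; constructor <;> linarith
  have hxj : ∀ j, j ≠ i → xt j = x j := fun j hj => funext fun b =>
    hsame j b (fun h => hj (congrArg Sigma.fst h))
  have hxb : ∀ b : Fin (n i), b ≠ a → xt i b = x i b := fun b hb =>
    hsame i b (fun h => hb (eq_of_heq (Sigma.mk.inj_iff.mp h).2))
  -- fhat facts
  have hf_eq : ∀ j, j ≠ i → fhat f n xt j = fhat f n x j := by
    intro j hj; simp [fhat, hxj j hj]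
  have hf_i : fhat f n xt i - fhat f n x i = (1/(n i:ℝ)) * (f (xt i a) - f (x i a)) := by
    rw [fhat, fhat, ← mul_sub, ← Finset.sum_sub_distrib]
    congr 1
    rw [Finset.sum_eq_single a]
    · intro b _ hb; rw [hxb b hb]; ring
    · simp
  -- Khat facts
  have hK_eq : ∀ j k, j ≠ i → k ≠ i → Khat κ n xt j k = Khat κ n x j k := by
    intro j k hj hk; simp [Khat, hxj j hj, hxj k hk]
  have hK_symm : ∀ (y : (i : Fin m) → Fin (n i) → X) j k,
      Khat κ n y j k = Khat κ n y k j := by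
    intro y j k
    rw [Khat, Khat, Finset.sum_comm, mul_comm (n j : ℝ)]
    congr 1
    exact Finset.sum_congr rfl fun b _ => Finset.sum_congr rfl fun a' _ => hκsymm _ _
  have hK_ik : ∀ k, k ≠ i → |Khat κ n xt i k - Khat κ n x i k| ≤ (κ1 - κ0) / (n i : ℝ) := by
    intro k hk
    have hnk : (0:ℝ) < (n k : ℝ) := by have := hn k; positivity
    have heq : Khat κ n xt i k - Khat κ n x i k
        = (1/((n i:ℝ)*(n k:ℝ))) * ∑ b, (κ (xt i a) (x k b) - κ (x i a) (x k b)) := by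
      rw [Khat, Khat, ← mul_sub, ← Finset.sum_sub_distrib]
      congr 1
      rw [Finset.sum_eq_single a]
      · rw [← Finset.sum_sub_distrib, hxj k hk]
      · intro b _ hb
        rw [← Finset.sum_sub_distrib, hxb b hb, hxj k hk]
        simp
      · simp
    rw [heq, abs_mul]
    have h1 : |(1:ℝ)/((n i:ℝ)*(n k:ℝ))| = 1/((n i:ℝ)*(n k:ℝ)) := by
      rw [abs_of_nonneg]; positivity
    rw [h1]
    have h2 : |∑ b, (κ (xt i a) (x k b) - κ (x i a) (x k b))| ≤ (n k : ℝ) * (κ1 - κ0) := by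
      calc |∑ b, (κ (xt i a) (x k b) - κ (x i a) (x k b))|
          ≤ ∑ b, |κ (xt i a) (x k b) - κ (x i a) (x k b)| := Finset.abs_sum_le_sum_abs _ _
        _ ≤ ∑ _b : Fin (n k), (κ1 - κ0) := Finset.sum_le_sum fun b _ => hκd _ _ _ _
        _ = (n k : ℝ) * (κ1 - κ0) := by simp [mul_comm]; ring
    calc 1/((n i:ℝ)*(n k:ℝ)) * |∑ b, (κ (xt i a) (x k b) - κ (x i a) (x k b))|
        ≤ 1/((n i:ℝ)*(n k:ℝ)) * ((n k : ℝ) * (κ1 - κ0)) := by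
          apply mul_le_mul_of_nonneg_left h2; positivity
      _ = (κ1 - κ0) / (n i : ℝ) := by field_simp
  have hK_ii : |Khat κ n xt i i - Khat κ n x i i| ≤ 2 * (κ1 - κ0) / (n i : ℝ) := by
    have heq : Khat κ n xt i i - Khat κ n x i i
        = (1/((n i:ℝ)*(n i:ℝ))) * ∑ a', ∑ b, (κ (xt i a') (xt i b) - κ (x i a') (x i b)) := by
      rw [Khat, Khat, ← mul_sub, ← Finset.sum_sub_distrib]
      congr 1
      exact Finset.sum_congr rfl fun a' _ => (Finset.sum_sub_distrib _ _).symm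
    have hsplit : ∑ a', ∑ b, (κ (xt i a') (xt i b) - κ (x i a') (x i b))
        = (∑ b, (κ (xt i a) (xt i b) - κ (x i a) (x i b)))
          + ∑ a' ∈ Finset.univ.erase a, (κ (x i a') (xt i a) - κ (x i a') (x i a)) := by
      rw [← Finset.add_sum_erase _ _ (Finset.mem_univ a)]
      congr 1
      apply Finset.sum_congr rfl
      intro a' ha'
      have ha'ne : a' ≠ a := Finset.ne_of_mem_erase ha'
      rw [Finset.sum_eq_single a]
      · rw [hxb a' ha'ne]
      · intro b _ hb; rw [hxb b hb, hxb a' ha'ne]; ring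
      · simp
    rw [heq, hsplit, abs_mul]
    have h1 : |(1:ℝ)/((n i:ℝ)*(n i:ℝ))| = 1/((n i:ℝ)*(n i:ℝ)) := by
      rw [abs_of_nonneg]; positivity
    rw [h1]
    have hb1 : |∑ b, (κ (xt i a) (xt i b) - κ (x i a) (x i b))| ≤ (n i : ℝ) * (κ1 - κ0) :=
      calc |∑ b, (κ (xt i a) (xt i b) - κ (x i a) (x i b))|
          ≤ ∑ b, |κ (xt i a) (xt i b) - κ (x i a) (x i b)| := Finset.abs_sum_le_sum_abs _ _
        _ ≤ ∑ _b : Fin (n i), (κ1 - κ0) := Finset.sum_le_sum fun b _ => hκd _ _ _ _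
        _ = (n i : ℝ) * (κ1 - κ0) := by simp [mul_comm]; ring
    have hb2 : |∑ a' ∈ Finset.univ.erase a, (κ (x i a') (xt i a) - κ (x i a') (x i a))|
        ≤ (n i : ℝ) * (κ1 - κ0) :=
      calc |∑ a' ∈ Finset.univ.erase a, (κ (x i a') (xt i a) - κ (x i a') (x i a))|
          ≤ ∑ a' ∈ Finset.univ.erase a, |κ (x i a') (xt i a) - κ (x i a') (x i a)| :=
            Finset.abs_sum_le_sum_abs _ _
        _ ≤ ∑ a' ∈ Finset.univ.erase a, (κ1 - κ0) := Finset.sum_le_sum fun b _ => hκd _ _ _ _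
        _ ≤ ∑ _a' : Fin (n i), (κ1 - κ0) := Finset.sum_le_sum_of_subset_of_nonneg
            (Finset.erase_subset _ _) (fun _ _ _ => hc0)
        _ = (n i : ℝ) * (κ1 - κ0) := by simp [mul_comm]; ring
    calc 1/((n i:ℝ)*(n i:ℝ)) * |(∑ b, (κ (xt i a) (xt i b) - κ (x i a) (x i b)))
            + ∑ a' ∈ Finset.univ.erase a, (κ (x i a') (xt i a) - κ (x i a') (x i a))|
        ≤ 1/((n i:ℝ)*(n i:ℝ)) * ((n i : ℝ) * (κ1 - κ0) + (n i : ℝ) * (κ1 - κ0)) := by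
          apply mul_le_mul_of_nonneg_left _ (by positivity)
          exact (abs_add_le _ _).trans (add_le_add hb1 hb2)
      _ = 2 * (κ1 - κ0) / (n i : ℝ) := by field_simp; ring
  have hK_ki : ∀ k, k ≠ i → |Khat κ n xt k i - Khat κ n x k i| ≤ (κ1 - κ0) / (n i : ℝ) := by
    intro k hk
    rw [hK_symm xt k i, hK_symm x k i]
    exact hK_ik k hk
  -- decompose Lhat difference
  set D : Fin m → Fin m → ℝ := fun j k => α j * α k * (Khat κ n xt j k - Khat κ n x j k) with hD
  have hdiff : Lhat κ f n α xt - Lhat κ f n α x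
      = (∑ j, ∑ k, D j k) + ∑ j, α j * (fhat f n xt j - fhat f n x j) := by
    simp only [Lhat, hD, mul_sub, Finset.sum_sub_distrib]
    ring
  -- f part
  have hfsum : ∑ j, α j * (fhat f n xt j - fhat f n x j)
      = α i * ((1/(n i:ℝ)) * (f (xt i a) - f (x i a))) := by
    rw [Finset.sum_eq_single i]
    · rw [hf_i]
    · intro j _ hj; rw [hf_eq j hj]; ring
    · simp
  have hfbound : |∑ j, α j * (fhat f n xt j - fhat f n x j)| ≤ α i / (n i:ℝ) * (f1 - f0) := by
    rw [hfsum, abs_mul, abs_mul, abs_of_nonneg (hα0 i), abs_of_nonneg (by positivity :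
      (0:ℝ) ≤ 1/(n i:ℝ))]
    have h1 := hfbdd (xt i a); have h2 := hfbdd (x i a)
    simp only [Set.mem_Icc] at h1 h2
    have : |f (xt i a) - f (x i a)| ≤ f1 - f0 := by
      rw [abs_sub_le_iff]; constructor <;> linarith
    calc α i * (1/(n i:ℝ) * |f (xt i a) - f (x i a)|)
        ≤ α i * (1/(n i:ℝ) * (f1 - f0)) := by
          apply mul_le_mul_of_nonneg_left _ (hα0 i)
          apply mul_le_mul_of_nonneg_left this (by positivity)
      _ = α i / (n i:ℝ) * (f1 - f0) := by ring
  -- K part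
  have herasesum : ∑ k ∈ Finset.univ.erase i, α k = 1 - α i := by
    rw [Finset.sum_erase_eq_sub (Finset.mem_univ i), hα1]
  have hKsplit : ∑ j, ∑ k, D j k = (∑ k, D i k) + ∑ j ∈ Finset.univ.erase i, D j i := by
    rw [← Finset.add_sum_erase _ _ (Finset.mem_univ i)]
    congr 1
    apply Finset.sum_congr rfl
    intro j hj
    have hjne : j ≠ i := Finset.ne_of_mem_erase hj
    rw [Finset.sum_eq_single i]
    · intro k _ hk; rw [hD]; simp only; rw [hK_eq j k hjne hk]; ring
    · simp
  have hrow : |∑ k, D i k| ≤ α i * α i * (2*(κ1-κ0)/(n i:ℝ)) + α i * (1 - α i) * ((κ1-κ0)/(n i:ℝ)) := by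
    rw [← Finset.add_sum_erase _ _ (Finset.mem_univ i)]
    refine (abs_add_le _ _).trans (add_le_add ?_ ?_)
    · rw [hD]; simp only
      rw [abs_mul, abs_mul, abs_of_nonneg (hα0 i)]
      apply mul_le_mul_of_nonneg_left hK_ii (mul_nonneg (hα0 i) (hα0 i))
    · calc |∑ k ∈ Finset.univ.erase i, D i k|
          ≤ ∑ k ∈ Finset.univ.erase i, |D i k| := Finset.abs_sum_le_sum_abs _ _
        _ ≤ ∑ k ∈ Finset.univ.erase i, α i * α k * ((κ1-κ0)/(n i:ℝ)) := by
            apply Finset.sum_le_sum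
            intro k hk
            rw [hD]; simp only
            rw [abs_mul, abs_mul, abs_of_nonneg (hα0 i), abs_of_nonneg (hα0 k)]
            exact mul_le_mul_of_nonneg_left (hK_ik k (Finset.ne_of_mem_erase hk))
              (mul_nonneg (hα0 i) (hα0 k))
        _ = α i * (1 - α i) * ((κ1-κ0)/(n i:ℝ)) := by
            rw [← Finset.sum_mul, ← Finset.mul_sum, herasesum]
  have hcol : |∑ j ∈ Finset.univ.erase i, D j i| ≤ α i * (1 - α i) * ((κ1-κ0)/(n i:ℝ)) := by
    calc |∑ j ∈ Finset.univ.erase i, D j i|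
        ≤ ∑ j ∈ Finset.univ.erase i, |D j i| := Finset.abs_sum_le_sum_abs _ _
      _ ≤ ∑ j ∈ Finset.univ.erase i, α j * α i * ((κ1-κ0)/(n i:ℝ)) := by
          apply Finset.sum_le_sum
          intro j hj
          rw [hD]; simp only
          rw [abs_mul, abs_mul, abs_of_nonneg (hα0 j), abs_of_nonneg (hα0 i)]
          exact mul_le_mul_of_nonneg_left (hK_ki j (Finset.ne_of_mem_erase hj))
            (mul_nonneg (hα0 j) (hα0 i))
      _ = α i * (1 - α i) * ((κ1-κ0)/(n i:ℝ)) := by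
          rw [← Finset.sum_mul, ← Finset.sum_mul, herasesum]; ring
  have hαi1 : α i ≤ 1 := by
    rw [← hα1]
    exact Finset.single_le_sum (fun j _ => hα0 j) (Finset.mem_univ i)
  rw [hdiff]
  calc |(∑ j, ∑ k, D j k) + ∑ j, α j * (fhat f n xt j - fhat f n x j)|
      ≤ |∑ j, ∑ k, D j k| + |∑ j, α j * (fhat f n xt j - fhat f n x j)| := abs_add_le _ _
    _ ≤ (|∑ k, D i k| + |∑ j ∈ Finset.univ.erase i, D j i|) + α i / (n i:ℝ) * (f1 - f0) := by
        rw [hKsplit]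
        exact add_le_add (abs_add_le _ _) hfbound
    _ ≤ (α i * α i * (2*(κ1-κ0)/(n i:ℝ)) + 2 * (α i * (1 - α i) * ((κ1-κ0)/(n i:ℝ))))
          + α i / (n i:ℝ) * (f1 - f0) := by linarith [hrow, hcol]
    _ ≤ (α i / (n i : ℝ)) * (2 * (κ1 - κ0) + (f1 - f0)) := by
        have key : α i * α i * (2*(κ1-κ0)/(n i:ℝ)) + 2 * (α i * (1 - α i) * ((κ1-κ0)/(n i:ℝ)))
            = α i / (n i:ℝ) * (2 * (κ1-κ0)) := by field_simp; ring
        rw [key]; ring_nf; linarith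
end
end

section
/- Fix a probability vector α. Suppose for each i ∈ [m] we have n_i ≥ 1 i.i.d. samples x_{i,1},…,x_{i,n_i} ~ P_i, independent across i. Then |L(α) − E[L̂(α; x)]| ≤ Δ_κ ∑_{i=1}^m α_i² / n_i. -/
open MeasureTheory Finset

noncomputable section

/-- Population kernel matrix `K_{ij} = E_{X ~ P_i, X' ~ P_j}[κ(X, X')]`. -/
def Kpop {X : Type*} [MeasurableSpace X] {m : ℕ} (P : Fin m → Measure X)
    (κ : X → X → ℝ) (i j : Fin m) : ℝ :=
  ∫ p, κ p.1 p.2 ∂((P i).prod (P j))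

/-- Population mean vector `f_i = E_{P_i}[f]`. -/
def fpop {X : Type*} [MeasurableSpace X] {m : ℕ} (P : Fin m → Measure X)
    (f : X → ℝ) (i : Fin m) : ℝ :=
  ∫ y, f y ∂(P i)

/-- Population loss `L(α) = αᵀ K α + fᵀ α`. -/
def Lpop {X : Type*} [MeasurableSpace X] {m : ℕ} (P : Fin m → Measure X)
    (κ : X → X → ℝ) (f : X → ℝ) (α : Fin m → ℝ) : ℝ :=
  ∑ i, ∑ j, α i * α j * Kpop P κ i j + ∑ i, α i * fpop P f i

/-- The joint law of independent samples, `n i` i.i.d. samples from `P i` for each arm `i`. -/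
def sampleMeasure {X : Type*} [MeasurableSpace X] {m : ℕ} (P : Fin m → Measure X)
    (n : Fin m → ℕ) : Measure ((i : Fin m) → Fin (n i) → X) :=
  Measure.pi fun i => Measure.pi fun _ => P i


section BiasHelpers

variable {ι : Type*} [Fintype ι] [DecidableEq ι] {Y : ι → Type*} [∀ i, MeasurableSpace (Y i)]
  (μ : (i : ι) → Measure (Y i)) [∀ i, IsProbabilityMeasure (μ i)]

lemma mpEval (i : ι) : MeasurePreserving (Function.eval i) (Measure.pi μ) (μ i) := by
  refine ⟨measurable_pi_apply i, ?_⟩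
  ext s hs
  rw [Measure.map_apply (measurable_pi_apply i) hs, Set.eval_preimage, Measure.pi_pi]
  rw [← Finset.mul_prod_erase Finset.univ _ (Finset.mem_univ i)]
  simp only [Function.update_self]
  rw [Finset.prod_eq_one, mul_one]
  intro k hk
  rw [Function.update_of_ne (Finset.ne_of_mem_erase hk)]
  simp

lemma mpPairEval {i j : ι} (hij : i ≠ j) :
    MeasurePreserving (fun x => (x i, x j)) (Measure.pi μ) ((μ i).prod (μ j)) := by
  have hmeas : Measurable (fun x : (k : ι) → Y k => (x i, x j)) :=
    (measurable_pi_apply i).prodMk (measurable_pi_apply j)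
  refine ⟨hmeas, ?_⟩
  refine (Measure.prod_eq (μ := μ i) (ν := μ j) fun s t hs ht => ?_).symm
  rw [Measure.map_apply hmeas (hs.prod ht)]
  have hpre : (fun x : (k : ι) → Y k => (x i, x j)) ⁻¹' (s ×ˢ t)
      = Set.pi Set.univ (Function.update (Function.update (fun k => (Set.univ : Set (Y k))) i s) j t) := by
    ext x
    simp only [Set.mem_preimage, Set.mem_prod, Set.mem_pi, Set.mem_univ, true_implies]
    constructor
    · rintro ⟨h1, h2⟩ k
      rcases eq_or_ne k j with rfl | hkj
      · simpa using h2
      rcases eq_or_ne k i with rfl | hki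
      · rw [Function.update_of_ne hkj, Function.update_self]; exact h1
      · simp [Function.update_of_ne hkj, Function.update_of_ne hki]
    · intro h
      refine ⟨?_, ?_⟩
      · have := h i
        rwa [Function.update_of_ne hij, Function.update_self] at this
      · have := h j
        rwa [Function.update_self] at this
  rw [hpre, Measure.pi_pi]
  rw [← Finset.mul_prod_erase Finset.univ _ (Finset.mem_univ j), Function.update_self]
  rw [← Finset.mul_prod_erase _ _ (Finset.mem_erase.mpr ⟨hij, Finset.mem_univ i⟩)]
  rw [Function.update_of_ne hij, Function.update_self]
  rw [Finset.prod_eq_one, mul_one, mul_comm]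
  intro k hk
  have hkj : k ≠ j := Finset.ne_of_mem_erase (Finset.mem_of_mem_erase hk)
  have hki : k ≠ i := Finset.ne_of_mem_erase hk
  rw [Function.update_of_ne hkj, Function.update_of_ne hki]
  simp

end BiasHelpers

lemma mp_integral {A B : Type*} [MeasurableSpace A] [MeasurableSpace B]
    {μ : Measure A} {ν : Measure B} {T : A → B} (h : MeasurePreserving T μ ν)
    {g : B → ℝ} (hg : AEStronglyMeasurable g ν) :
    ∫ x, g (T x) ∂μ = ∫ y, g y ∂ν := by
  rw [← h.map_eq]
  exact (integral_map h.measurable.aemeasurable (by rwa [h.map_eq])).symm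

lemma integrable_bdd {A : Type*} [MeasurableSpace A] (μ : Measure A) [IsProbabilityMeasure μ]
    {g : A → ℝ} (hg : Measurable g) {c0 c1 : ℝ} (h : ∀ x, g x ∈ Set.Icc c0 c1) :
    Integrable g μ := by
  refine (integrable_const (max |c0| |c1|)).mono' hg.aestronglyMeasurable ?_
  exact ae_of_all _ fun x => abs_le_max_abs_abs (h x).1 (h x).2

lemma integral_mem_Icc {A : Type*} [MeasurableSpace A] (μ : Measure A) [IsProbabilityMeasure μ]
    {g : A → ℝ} (hg : Measurable g) {c0 c1 : ℝ} (h : ∀ x, g x ∈ Set.Icc c0 c1) :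
    (∫ x, g x ∂μ) ∈ Set.Icc c0 c1 := by
  have hint := integrable_bdd μ hg h
  constructor
  · calc c0 = ∫ _, c0 ∂μ := by simp
      _ ≤ ∫ x, g x ∂μ := integral_mono (integrable_const c0) hint fun x => (h x).1
  · calc ∫ x, g x ∂μ ≤ ∫ _, c1 ∂μ := integral_mono hint (integrable_const c1) fun x => (h x).2
      _ = c1 := by simp

/-- Bias bound: `|L(α) − E[L̂(α;x)]| ≤ Δ_κ ∑_i α_i² / n_i`. -/
theorem lhat_bias_bound
    {X : Type*} [MeasurableSpace X] {m : ℕ}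
    (P : Fin m → Measure X) (hP : ∀ i, IsProbabilityMeasure (P i))
    (κ : X → X → ℝ) (f : X → ℝ)
    (hκmeas : Measurable (Function.uncurry κ)) (hfmeas : Measurable f)
    (κ0 κ1 f0 f1 : ℝ)
    (hκbdd : ∀ x y, κ x y ∈ Set.Icc κ0 κ1) (hfbdd : ∀ y, f y ∈ Set.Icc f0 f1)
    (hκsymm : ∀ x y, κ x y = κ y x)
    (n : Fin m → ℕ) (hn : ∀ i, 1 ≤ n i)
    (α : Fin m → ℝ) (hα : α ∈ stdSimplex ℝ (Fin m)) :
    |Lpop P κ f α - ∫ x, Lhat κ f n α x ∂(sampleMeasure P n)| ≤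
      (κ1 - κ0) * ∑ i, α i ^ 2 / (n i : ℝ) := by
  classical
  haveI := hP
  set μ := sampleMeasure P n with hμdef
  haveI hμprob : IsProbabilityMeasure μ :=
    inferInstanceAs (IsProbabilityMeasure (Measure.pi fun i => Measure.pi fun _ => P i))
  -- basic measurability
  have hmeval : ∀ (i : Fin m) (a : Fin (n i)),
      Measurable (fun x : (i : Fin m) → Fin (n i) → X => x i a) :=
    fun i a => (measurable_pi_apply a).comp (measurable_pi_apply i)
  -- measure preserving maps
  have hMP1 : ∀ (i : Fin m) (a : Fin (n i)),
      MeasurePreserving (fun x : (i : Fin m) → Fin (n i) → X => x i a) μ (P i) :=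
    fun i a => (mpEval (fun _ : Fin (n i) => P i) a).comp
      (mpEval (fun i => Measure.pi fun _ : Fin (n i) => P i) i)
  have hMP2 : ∀ (i j : Fin m), i ≠ j → ∀ (a : Fin (n i)) (b : Fin (n j)),
      MeasurePreserving (fun x : (i : Fin m) → Fin (n i) → X => (x i a, x j b)) μ
        ((P i).prod (P j)) := fun i j hij a b =>
    ((mpEval (fun _ : Fin (n i) => P i) a).prod (mpEval (fun _ : Fin (n j) => P j) b)).comp
      (mpPairEval (fun i => Measure.pi fun _ : Fin (n i) => P i) hij)
  have hMP3 : ∀ (i : Fin m) (a b : Fin (n i)), a ≠ b →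
      MeasurePreserving (fun x : (i : Fin m) → Fin (n i) → X => (x i a, x i b)) μ
        ((P i).prod (P i)) := fun i a b hab =>
    (mpPairEval (fun _ : Fin (n i) => P i) hab).comp
      (mpEval (fun i => Measure.pi fun _ : Fin (n i) => P i) i)
  -- integrability
  have hint_f : ∀ (i : Fin m) (a : Fin (n i)),
      Integrable (fun x : (i : Fin m) → Fin (n i) → X => f (x i a)) μ :=
    fun i a => integrable_bdd μ (hfmeas.comp (hmeval i a)) fun x => hfbdd _
  have hint_κ : ∀ (i j : Fin m) (a : Fin (n i)) (b : Fin (n j)),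
      Integrable (fun x : (i : Fin m) → Fin (n i) → X => κ (x i a) (x j b)) μ :=
    fun i j a b => integrable_bdd μ
      (hκmeas.comp ((hmeval i a).prodMk (hmeval j b))) fun x => hκbdd _ _
  have hnpos : ∀ i, (0 : ℝ) < n i := fun i => by exact_mod_cast hn i
  have hnne : ∀ i, (n i : ℝ) ≠ 0 := fun i => (hnpos i).ne'
  -- diagonal expectation
  set D : Fin m → ℝ := fun i => ∫ y, κ y y ∂(P i) with hDdef
  have hκdiagmeas : Measurable fun y : X => κ y y :=
    hκmeas.comp (measurable_id.prodMk measurable_id)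
  -- expectations of single samples
  have hEf : ∀ (i : Fin m) (a : Fin (n i)),
      ∫ x, f (x i a) ∂μ = fpop P f i :=
    fun i a => mp_integral (hMP1 i a) hfmeas.aestronglyMeasurable
  have hEκ : ∀ (i j : Fin m) (a : Fin (n i)) (b : Fin (n j)), i ≠ j →
      ∫ x, κ (x i a) (x j b) ∂μ = Kpop P κ i j := fun i j a b hij =>
    mp_integral (hMP2 i j hij a b) hκmeas.aestronglyMeasurable
  have hEκ2 : ∀ (i : Fin m) (a b : Fin (n i)), a ≠ b →
      ∫ x, κ (x i a) (x i b) ∂μ = Kpop P κ i i := fun i a b hab =>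
    mp_integral (hMP3 i a b hab) hκmeas.aestronglyMeasurable
  have hEκ3 : ∀ (i : Fin m) (a : Fin (n i)),
      ∫ x, κ (x i a) (x i a) ∂μ = D i := fun i a =>
    mp_integral (hMP1 i a) hκdiagmeas.aestronglyMeasurable
  -- expectation of fhat
  have hEfhat : ∀ i, ∫ x, fhat f n x i ∂μ = fpop P f i := by
    intro i
    unfold fhat
    rw [integral_const_mul, integral_finset_sum _ fun a _ => hint_f i a]
    rw [Finset.sum_congr rfl fun a _ => hEf i a]
    simp only [Finset.sum_const, Finset.card_univ, Fintype.card_fin, nsmul_eq_mul]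
    field_simp [hnne i]
  -- expectation of Khat
  have hEKhat : ∀ i j, ∫ x, Khat κ n x i j ∂μ
      = Kpop P κ i j + (if i = j then (D i - Kpop P κ i i) / (n i) else 0) := by
    intro i j
    unfold Khat
    rw [integral_const_mul,
      integral_finset_sum _ fun a _ => integrable_finset_sum _ fun b _ => hint_κ i j a b,
      Finset.sum_congr rfl fun a _ => integral_finset_sum _ fun b _ => hint_κ i j a b]
    rcases eq_or_ne i j with rfl | hij
    · rw [if_pos rfl]
      have hinner : ∀ a : Fin (n i),
          (∑ b, ∫ x, κ (x i a) (x i b) ∂μ) = (n i : ℝ) * Kpop P κ i i + (D i - Kpop P κ i i) := by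
        intro a
        have : ∀ b : Fin (n i), ∫ x, κ (x i a) (x i b) ∂μ
            = Kpop P κ i i + (if b = a then D i - Kpop P κ i i else 0) := by
          intro b
          rcases eq_or_ne b a with rfl | hba
          · rw [hEκ3 i b]; simp
          · rw [hEκ2 i a b (Ne.symm hba)]; simp [hba]
        rw [Finset.sum_congr rfl fun b _ => this b, Finset.sum_add_distrib,
          Finset.sum_ite_eq' Finset.univ a fun _ => D i - Kpop P κ i i]
        simp [Finset.card_univ, mul_comm]
      rw [Finset.sum_congr rfl fun a _ => hinner a]
      simp only [Finset.sum_const, Finset.card_univ, Fintype.card_fin, nsmul_eq_mul]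
      field_simp [hnne i]
    · simp only [if_neg hij, add_zero]
      rw [Finset.sum_congr rfl fun a _ =>
        Finset.sum_congr rfl fun b _ => hEκ i j a b hij]
      simp only [Finset.sum_const, Finset.card_univ, Fintype.card_fin, nsmul_eq_mul]
      field_simp [hnne i, hnne j]
  -- expectation of Lhat
  have hIntKhat : ∀ i j, Integrable (fun x => Khat κ n x i j) μ := by
    intro i j
    unfold Khat
    exact (integrable_finset_sum _ fun a _ =>
      integrable_finset_sum _ fun b _ => hint_κ i j a b).const_mul _
  have hIntfhat : ∀ i, Integrable (fun x => fhat f n x i) μ := by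
    intro i
    unfold fhat
    exact (integrable_finset_sum _ fun a _ => hint_f i a).const_mul _
  have hELhat : ∫ x, Lhat κ f n α x ∂μ
      = ∑ i, ∑ j, α i * α j *
          (Kpop P κ i j + (if i = j then (D i - Kpop P κ i i) / (n i) else 0))
        + ∑ i, α i * fpop P f i := by
    unfold Lhat
    rw [integral_add
      (integrable_finset_sum _ fun i _ => integrable_finset_sum _ fun j _ =>
        (hIntKhat i j).const_mul _)
      (integrable_finset_sum _ fun i _ => (hIntfhat i).const_mul _)]
    congr 1
    · rw [integral_finset_sum _ fun i _ => integrable_finset_sum _ fun j _ =>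
        (hIntKhat i j).const_mul _]
      refine Finset.sum_congr rfl fun i _ => ?_
      rw [integral_finset_sum _ fun j _ => (hIntKhat i j).const_mul _]
      refine Finset.sum_congr rfl fun j _ => ?_
      rw [integral_const_mul, hEKhat i j]
    · rw [integral_finset_sum _ fun i _ => (hIntfhat i).const_mul _]
      refine Finset.sum_congr rfl fun i _ => ?_
      rw [integral_const_mul, hEfhat i]
  -- the bias formula
  have hbias : Lpop P κ f α - ∫ x, Lhat κ f n α x ∂μ
      = ∑ i, α i ^ 2 * ((Kpop P κ i i - D i) / (n i)) := by
    rw [hELhat]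
    unfold Lpop
    have hsplit : ∀ i j : Fin m, α i * α j *
        (Kpop P κ i j + (if i = j then (D i - Kpop P κ i i) / (n i) else 0))
        = α i * α j * Kpop P κ i j
          + (if j = i then α i * α j * ((D i - Kpop P κ i i) / (n i)) else 0) := by
      intro i j
      rcases eq_or_ne i j with rfl | hij
      · simp; ring
      · simp [hij, Ne.symm hij]
    rw [Finset.sum_congr rfl fun i _ => Finset.sum_congr rfl fun j _ => hsplit i j]
    simp only [Finset.sum_add_distrib, Finset.sum_ite_eq' Finset.univ, Finset.mem_univ,
      if_pos]
    ring_nf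
    rw [← Finset.sum_neg_distrib]
    exact Finset.sum_congr rfl fun i _ => by ring
  rw [hbias]
  have hterm : ∀ i : Fin m, |α i ^ 2 * ((Kpop P κ i i - D i) / (n i))|
      ≤ (κ1 - κ0) * (α i ^ 2 / (n i : ℝ)) := by
    intro i
    have hK : Kpop P κ i i ∈ Set.Icc κ0 κ1 := by
      haveI : IsProbabilityMeasure ((P i).prod (P i)) := by infer_instance
      exact integral_mem_Icc _ hκmeas fun p => hκbdd p.1 p.2
    have hD : D i ∈ Set.Icc κ0 κ1 := integral_mem_Icc _ hκdiagmeas fun y => hκbdd y y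
    have hKD : |Kpop P κ i i - D i| ≤ κ1 - κ0 := by
      rw [abs_le]
      constructor <;> [linarith [hK.1, hD.2]; linarith [hK.2, hD.1]]
    have hα2 : (0:ℝ) ≤ α i ^ 2 := sq_nonneg _
    rw [abs_mul, abs_div, abs_of_nonneg hα2, abs_of_nonneg (hnpos i).le]
    calc α i ^ 2 * (|Kpop P κ i i - D i| / (n i))
        ≤ α i ^ 2 * ((κ1 - κ0) / (n i)) := by
          apply mul_le_mul_of_nonneg_left _ hα2
          exact (div_le_div_iff_of_pos_right (hnpos i)).mpr hKD
      _ = (κ1 - κ0) * (α i ^ 2 / (n i : ℝ)) := by ring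
  calc |∑ i, α i ^ 2 * ((Kpop P κ i i - D i) / (n i))|
      ≤ ∑ i, |α i ^ 2 * ((Kpop P κ i i - D i) / (n i))| := Finset.abs_sum_le_sum_abs _ _
    _ ≤ ∑ i, (κ1 - κ0) * (α i ^ 2 / (n i : ℝ)) := Finset.sum_le_sum fun i _ => hterm i
    _ = (κ1 - κ0) * ∑ i, α i ^ 2 / (n i : ℝ) := by rw [Finset.mul_sum]
end
end

section
/- Fix a probability vector α. Suppose for each i ∈ [m] we have n_i ≥ 1 i.i.d. samples x_{i,1},…,x_{i,n_i} ~ P_i, independent across i. Then for every ε > 0, P( L̂(α; x) − E[L̂(α; x)] ≥ ε ) ≤ exp( −2ε² / ( Δ_L² ∑_{i=1}^m α_i² / n_i ) ). -/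
open MeasureTheory Finset

noncomputable section

section AuxMcDiarmid
open Real

universe u

lemma integrable_of_bdd' {Ω : Type*} [MeasurableSpace Ω] {μ : Measure Ω} [IsFiniteMeasure μ]
    {f : Ω → ℝ} (hf : AEStronglyMeasurable f μ) {C : ℝ} (h : ∀ x, |f x| ≤ C) : Integrable f μ :=
  ⟨hf, HasFiniteIntegral.of_bounded (ae_of_all _ (by simpa using h))⟩

lemma nonempty_of_prob {Ω : Type*} [MeasurableSpace Ω] (μ : Measure Ω) [IsProbabilityMeasure μ] :
    Nonempty Ω := by
  by_contra hE
  rw [not_nonempty_iff] at hE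
  have h1 : μ Set.univ = 1 := measure_univ
  rw [Set.univ_eq_empty_iff.2 hE, measure_empty] at h1
  exact zero_ne_one h1

lemma hoeffding_core (p : ℝ) (hp0 : 0 ≤ p) (hp1 : p ≤ 1) (h : ℝ) :
    -(p*h) + Real.log (1 - p + p * Real.exp h) ≤ h^2/8 := by
  set G : ℝ → ℝ := fun u => 1 - p + p * Real.exp u with hGdef
  have hGpos : ∀ u, 0 < G u := by
    intro u
    simp only [hGdef]
    rcases eq_or_lt_of_le hp0 with hp | hp
    · rw [← hp]; norm_num
    · linarith [mul_pos hp (Real.exp_pos u)]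
  set φ : ℝ → ℝ := fun u => u^2/8 + p*u - Real.log (G u) with hφdef
  set D : ℝ → ℝ := fun u => u/4 + p - p * Real.exp u / G u with hDdef
  have hG : ∀ u, HasDerivAt G (p * Real.exp u) u := by
    intro u
    exact ((Real.hasDerivAt_exp u).const_mul p).const_add (1 - p)
  have hφ : ∀ u, HasDerivAt φ (D u) u := by
    intro u
    have hlog : HasDerivAt (fun u => Real.log (G u)) (p * Real.exp u / G u) u :=
      (hG u).log (hGpos u).ne'
    have h1 : HasDerivAt (fun u : ℝ => u^2/8 + p*u) (u/4 + p) u := by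
      have := ((hasDerivAt_pow 2 u).div_const 8).add ((hasDerivAt_id u).const_mul p)
      rw [show u/4 + p = ((2:ℕ):ℝ) * u ^ (2 - 1) / 8 + p * 1 by push_cast; ring]
      exact this
    exact h1.sub hlog
  have hD : ∀ u, HasDerivAt D (1/4 - p * Real.exp u * (1-p) / (G u)^2) u := by
    intro u
    have hnum : HasDerivAt (fun u => p * Real.exp u) (p * Real.exp u) u :=
      (Real.hasDerivAt_exp u).const_mul p
    have hdiv : HasDerivAt (fun u => p * Real.exp u / G u)
        ((p * Real.exp u * G u - p * Real.exp u * (p * Real.exp u)) / (G u)^2) u :=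
      hnum.div (hG u) (hGpos u).ne'
    have h1 : HasDerivAt (fun u : ℝ => u/4 + p) (1/4) u := by
      simpa using (hasDerivAt_id u).div_const 4 |>.add_const p
    have hnum_eq : p * Real.exp u * G u - p * Real.exp u * (p * Real.exp u)
        = p * Real.exp u * (1-p) := by simp only [hGdef]; ring
    have := h1.sub hdiv
    rw [hnum_eq] at this
    exact this
  -- E ≥ 0
  have hE : ∀ u, 0 ≤ 1/4 - p * Real.exp u * (1-p) / (G u)^2 := by
    intro u
    rw [sub_nonneg, div_le_iff₀ (pow_pos (hGpos u) 2)]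
    simp only [hGdef]
    nlinarith [sq_nonneg (p * Real.exp u - (1-p)), Real.exp_pos u]
  have hDmono : Monotone D := by
    refine monotone_of_deriv_nonneg (fun u => (hD u).differentiableAt) (fun u => ?_)
    rw [(hD u).deriv]; exact hE u
  have hD0 : D 0 = 0 := by simp [hDdef, hGdef]
  have hφ0 : φ 0 = 0 := by simp [hφdef, hGdef]
  have hφnonneg : 0 ≤ φ h := by
    rcases le_total 0 h with hh | hh
    · have : MonotoneOn φ (Set.Ici 0) := by
        refine monotoneOn_of_deriv_nonneg (convex_Ici 0)
          (fun u _ => (hφ u).differentiableAt.continuousAt.continuousWithinAt)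
          (fun u _ => (hφ u).differentiableAt.differentiableWithinAt) (fun u hu => ?_)
        rw [(hφ u).deriv]
        rw [interior_Ici] at hu
        have : D 0 ≤ D u := hDmono (le_of_lt hu)
        rw [hD0] at this; exact this
      have := this Set.self_mem_Ici (Set.mem_Ici.2 hh) hh
      rwa [hφ0] at this
    · have : AntitoneOn φ (Set.Iic 0) := by
        refine antitoneOn_of_deriv_nonpos (convex_Iic 0)
          (fun u _ => (hφ u).differentiableAt.continuousAt.continuousWithinAt)
          (fun u _ => (hφ u).differentiableAt.differentiableWithinAt) (fun u hu => ?_)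
        rw [(hφ u).deriv]
        rw [interior_Iic] at hu
        have : D u ≤ D 0 := hDmono (le_of_lt hu)
        rw [hD0] at this; exact this
      have := this (Set.mem_Iic.2 hh) Set.self_mem_Iic hh
      rwa [hφ0] at this
  have : Real.log (G h) ≤ h^2/8 + p*h := by
    have := hφnonneg
    simp only [hφdef] at this
    linarith
  simp only [hGdef] at this
  linarith

lemma Gpos (p : ℝ) (hp0 : 0 ≤ p) (hp1 : p ≤ 1) (h : ℝ) : 0 < 1 - p + p * Real.exp h := by
  rcases eq_or_lt_of_le hp0 with hp | hp
  · rw [← hp]; norm_num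
  · linarith [mul_pos hp (Real.exp_pos h)]

lemma hoeffding_int {Ω : Type*} [MeasurableSpace Ω] (μ : Measure Ω) [IsProbabilityMeasure μ]
    (Z : Ω → ℝ) (hZ : Measurable Z) (c : ℝ) (hosc : ∀ ω ω', Z ω - Z ω' ≤ c)
    (hmean : ∫ ω, Z ω ∂μ = 0) (t : ℝ) :
    ∫ ω, Real.exp (t * Z ω) ∂μ ≤ Real.exp (t^2 * c^2 / 8) := by
  haveI hne : Nonempty Ω := by
    by_contra hE
    rw [not_nonempty_iff] at hE
    have h1 : (μ Set.univ) = 1 := measure_univ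
    rw [Set.univ_eq_empty_iff.2 hE, measure_empty] at h1
    exact zero_ne_one h1
  obtain ⟨ω₀⟩ := id hne
  have hc0 : 0 ≤ c := by have := hosc ω₀ ω₀; linarith
  have hbdd : ∀ ω, |Z ω| ≤ |Z ω₀| + c := by
    intro ω
    have h1 := hosc ω ω₀
    have h2 := hosc ω₀ ω
    rw [abs_le]; constructor <;> cases abs_cases (Z ω₀) <;> linarith
  have hint : Integrable Z μ := integrable_of_bdd' hZ.aestronglyMeasurable hbdd
  set a : ℝ := ⨅ ω, Z ω with ha
  have hbb : BddBelow (Set.range Z) := ⟨Z ω₀ - c, by rintro _ ⟨ω, rfl⟩; linarith [hosc ω₀ ω]⟩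
  have ha_le : ∀ ω, a ≤ Z ω := fun ω => ciInf_le hbb ω
  have hle_a : ∀ ω, Z ω ≤ a + c := by
    intro ω
    have : Z ω - c ≤ a := le_ciInf (fun ω' => by linarith [hosc ω ω'])
    linarith
  have ha0 : a ≤ 0 := by
    have h1 : ∫ _, a ∂μ ≤ ∫ ω, Z ω ∂μ := integral_mono (integrable_const a) hint ha_le
    rwa [hmean, integral_const, probReal_univ, one_smul] at h1
  have hac0 : 0 ≤ a + c := by
    have h1 : ∫ ω, Z ω ∂μ ≤ ∫ _, a + c ∂μ := integral_mono hint (integrable_const _) hle_a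
    rwa [hmean, integral_const, probReal_univ, one_smul] at h1
  rcases eq_or_lt_of_le hc0 with hc | hc
  · -- c = 0 : Z ≡ 0
    have hZ0 : ∀ ω, Z ω = 0 := by
      intro ω
      have h1 := ha_le ω; have h2 := hle_a ω; linarith
    calc ∫ ω, Real.exp (t * Z ω) ∂μ = ∫ _, (1:ℝ) ∂μ := by
          congr 1; funext ω; rw [hZ0 ω]; simp
      _ = 1 := by simp
      _ ≤ _ := Real.one_le_exp (by positivity)
  · -- main case c > 0
    set p : ℝ := -a / c with hp
    have hp0 : 0 ≤ p := by apply div_nonneg <;> linarith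
    have hp1 : p ≤ 1 := by rw [div_le_one hc]; linarith
    set h : ℝ := t * c with hh
    -- pointwise convexity bound
    have hpt : ∀ ω, Real.exp (t * Z ω) ≤
        ((a + c - Z ω) * Real.exp (t*a) + (Z ω - a) * Real.exp (t*(a+c))) / c := by
      intro ω
      have hθ0 : 0 ≤ (a + c - Z ω)/c := by apply div_nonneg; linarith [hle_a ω]; linarith
      have hθ1 : 0 ≤ (Z ω - a)/c := by apply div_nonneg; linarith [ha_le ω]; linarith
      have hθs : (a + c - Z ω)/c + (Z ω - a)/c = 1 := by field_simp; ring
      have := convexOn_exp.2 (Set.mem_univ (t*a)) (Set.mem_univ (t*(a+c))) hθ0 hθ1 hθs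
      simp only [smul_eq_mul] at this
      have harg : (a + c - Z ω)/c * (t*a) + (Z ω - a)/c * (t*(a+c)) = t * Z ω := by
        field_simp; ring
      rw [harg] at this
      calc Real.exp (t * Z ω) ≤ _ := this
        _ = _ := by ring
    -- integrate
    have hdecomp : ∀ ω, ((a + c - Z ω) * Real.exp (t*a) + (Z ω - a) * Real.exp (t*(a+c))) / c
        = ((a+c) * Real.exp (t*a) - a * Real.exp (t*(a+c)))/c
          + Z ω * ((Real.exp (t*(a+c)) - Real.exp (t*a))/c) := by
      intro ω; field_simp; ring
    have hrhs_int : Integrable (fun ω => ((a + c - Z ω) * Real.exp (t*a) + (Z ω - a) * Real.exp (t*(a+c))) / c) μ := by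
      refine ((integrable_const _).add (hint.mul_const _)).congr (ae_of_all _ (fun ω => (hdecomp ω).symm))
    have hlhs_int : Integrable (fun ω => Real.exp (t * Z ω)) μ := by
      refine integrable_of_bdd' (by measurability) (C := Real.exp (|t| * (|Z ω₀| + c))) ?_
      intro ω
      rw [abs_of_nonneg (Real.exp_nonneg _)]
      apply Real.exp_le_exp.2
      calc t * Z ω ≤ |t * Z ω| := le_abs_self _
        _ = |t| * |Z ω| := abs_mul _ _
        _ ≤ |t| * (|Z ω₀| + c) := by
            apply mul_le_mul_of_nonneg_left (hbdd ω) (abs_nonneg t)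
    have hmono := integral_mono hlhs_int hrhs_int hpt
    have hIrhs : ∫ ω, ((a + c - Z ω) * Real.exp (t*a) + (Z ω - a) * Real.exp (t*(a+c))) / c ∂μ
        = ((a+c) * Real.exp (t*a) - a * Real.exp (t*(a+c))) / c := by
      simp_rw [hdecomp]
      rw [integral_add (integrable_const _) (hint.mul_const _), integral_const,
        integral_mul_const, hmean, probReal_univ]
      simp
    rw [hIrhs] at hmono
    refine hmono.trans ?_
    -- final: ((a+c)e^{ta} - a e^{t(a+c)})/c ≤ exp(t²c²/8)
    have hkey := hoeffding_core p hp0 hp1 h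
    have hGpos := Gpos p hp0 hp1 h
    have heq : ((a+c) * Real.exp (t*a) - a * Real.exp (t*(a+c))) / c
        = Real.exp (-(p*h) + Real.log (1 - p + p * Real.exp h)) := by
      rw [Real.exp_add, Real.exp_log hGpos]
      have h1 : Real.exp (-(p*h)) = Real.exp (t*a) := by
        congr 1; rw [hp, hh]; field_simp
      rw [h1]
      have h2 : Real.exp (t*(a+c)) = Real.exp (t*a) * Real.exp h := by
        rw [← Real.exp_add, hh]; congr 1; ring
      rw [h2, hp]
      field_simp
      ring
    rw [heq]
    apply Real.exp_le_exp.2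
    calc -(p*h) + Real.log (1 - p + p * Real.exp h) ≤ h^2/8 := hkey
      _ = t^2*c^2/8 := by rw [hh]; ring

lemma hoeffding_centered {Ω : Type*} [MeasurableSpace Ω] (μ : Measure Ω) [IsProbabilityMeasure μ]
    (Z : Ω → ℝ) (hZ : Measurable Z) (c t : ℝ) (hosc : ∀ ω ω', Z ω - Z ω' ≤ c) :
    ∫ ω, Real.exp (t * (Z ω - ∫ ω', Z ω' ∂μ)) ∂μ ≤ Real.exp (t^2 * c^2 / 8) := by
  haveI : Nonempty Ω := nonempty_of_prob μ
  obtain ω₀ := Classical.arbitrary Ω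
  have hbdd : ∀ ω, |Z ω| ≤ |Z ω₀| + c := by
    intro ω
    have h1 := hosc ω ω₀
    have h2 := hosc ω₀ ω
    rw [abs_le]; constructor <;> cases abs_cases (Z ω₀) <;> linarith
  have hint : Integrable Z μ := integrable_of_bdd' hZ.aestronglyMeasurable hbdd
  exact hoeffding_int μ (fun ω => Z ω - ∫ ω', Z ω' ∂μ) (hZ.sub measurable_const) c
    (fun ω ω' => by simpa using hosc ω ω')
    (by rw [integral_sub hint (integrable_const _), integral_const, probReal_univ]; simp) t

lemma piFinSuccAbove_symm_eq {M : ℕ} (Ω : Fin (M+1) → Type u) [∀ i, MeasurableSpace (Ω i)] :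
    ⇑(MeasurableEquiv.piFinSuccAbove Ω 0).symm = fun p : Ω 0 × (∀ j : Fin M, Ω j.succ) => Fin.cons p.1 p.2 := by
  funext p
  simp [MeasurableEquiv.piFinSuccAbove]
  rfl

lemma sg_step {M : ℕ} {Ω : Fin (M+1) → Type u} [∀ i, MeasurableSpace (Ω i)]
    (μ : ∀ i, Measure (Ω i)) [∀ i, IsProbabilityMeasure (μ i)]
    (g : (∀ i, Ω i) → ℝ) (hg : Measurable g) (B : ℝ) (hB : ∀ x, |g x| ≤ B)
    (t w₀ w₁ : ℝ)
    (hrest : ∀ ξ : Ω 0, ∫ z, Real.exp (t * (g (Fin.cons ξ z) -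
        ∫ z', g (Fin.cons ξ z') ∂(Measure.pi fun j : Fin M => μ j.succ))) ∂(Measure.pi fun j : Fin M => μ j.succ)
        ≤ Real.exp (t^2 * w₁ / 8))
    (hfirst : ∫ ξ, Real.exp (t * ((∫ z, g (Fin.cons ξ z) ∂(Measure.pi fun j : Fin M => μ j.succ)) -
        ∫ ξ', (∫ z, g (Fin.cons ξ' z) ∂(Measure.pi fun j : Fin M => μ j.succ)) ∂(μ 0))) ∂(μ 0)
        ≤ Real.exp (t^2 * w₀ / 8)) :
    ∫ x, Real.exp (t * (g x - ∫ x', g x' ∂(Measure.pi μ))) ∂(Measure.pi μ)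
      ≤ Real.exp (t^2 * (w₀ + w₁) / 8) := by
  haveI : ∀ i, Nonempty (Ω i) := fun i => nonempty_of_prob (μ i)
  have hBnn : 0 ≤ B := le_trans (abs_nonneg _) (hB (Classical.arbitrary _))
  set ν : Measure (∀ j : Fin M, Ω j.succ) := Measure.pi fun j : Fin M => μ j.succ with hν
  set pp : Measure (∀ i, Ω i) := Measure.pi μ with hpp
  set e := MeasurableEquiv.piFinSuccAbove Ω 0 with he
  have mp : MeasurePreserving (⇑e) pp ((μ 0).prod ν) := measurePreserving_piFinSuccAbove μ 0
  have hcons_eq : (fun p : Ω 0 × (∀ j : Fin M, Ω j.succ) => g (Fin.cons p.1 p.2)) = g ∘ ⇑e.symm := by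
    rw [he, piFinSuccAbove_symm_eq]; rfl
  have hcons_meas : Measurable (fun p : Ω 0 × (∀ j : Fin M, Ω j.succ) => g (Fin.cons p.1 p.2)) := by
    rw [hcons_eq]; exact hg.comp e.symm.measurable
  have hcons_bdd : ∀ p : Ω 0 × (∀ j : Fin M, Ω j.succ), |g (Fin.cons p.1 p.2)| ≤ B := fun p => hB _
  set G : Ω 0 → ℝ := fun ξ => ∫ z, g (Fin.cons ξ z) ∂ν with hG
  have hGsm : StronglyMeasurable G := (hcons_meas.stronglyMeasurable).integral_prod_right'
  have hGbdd : ∀ ξ, |G ξ| ≤ B := by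
    intro ξ
    calc |G ξ| = ‖∫ z, g (Fin.cons ξ z) ∂ν‖ := rfl
      _ ≤ B * (ν Set.univ).toReal :=
          norm_integral_le_of_norm_le_const (ae_of_all _ (fun z => by simpa using hB _))
      _ = B := by simp
  -- change of variables
  have hchg : ∀ (F : (∀ i, Ω i) → ℝ), ∫ x, F x ∂pp = ∫ p, F (Fin.cons p.1 p.2) ∂((μ 0).prod ν) := by
    intro F
    rw [← (mp.symm e).integral_comp e.symm.measurableEmbedding F]
    congr 1
    funext p
    rw [he, piFinSuccAbove_symm_eq]
  have hEg : ∫ x, g x ∂pp = ∫ ξ, G ξ ∂(μ 0) := by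
    rw [hchg g, integral_prod _ (integrable_of_bdd' hcons_meas.aestronglyMeasurable hcons_bdd)]
  have hEbdd0 : |∫ x, g x ∂pp| ≤ B := by
    rw [hEg]
    calc |∫ ξ, G ξ ∂(μ 0)| = ‖∫ ξ, G ξ ∂(μ 0)‖ := rfl
      _ ≤ B * ((μ 0) Set.univ).toReal :=
          norm_integral_le_of_norm_le_const (ae_of_all _ (fun ξ => by simpa using hGbdd ξ))
      _ = B := by simp
  set E : ℝ := ∫ x, g x ∂pp with hE
  -- bound on the exp integrand
  set C : ℝ := Real.exp (|t| * (2*B)) with hC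
  have hexp_bdd : ∀ u v : ℝ, |u| ≤ B → |v| ≤ B → Real.exp (t * (u - v)) ≤ C := by
    intro u v hu hv
    rw [hC]
    apply Real.exp_le_exp.2
    calc t * (u - v) ≤ |t * (u - v)| := le_abs_self _
      _ = |t| * |u - v| := abs_mul _ _
      _ ≤ |t| * (2*B) := by
          apply mul_le_mul_of_nonneg_left _ (abs_nonneg t)
          calc |u - v| ≤ |u| + |v| := abs_sub _ _
            _ ≤ 2*B := by linarith
  have hEbdd : |E| ≤ B := hEbdd0
  -- main computation
  have hmain : ∫ x, Real.exp (t * (g x - E)) ∂pp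
      = ∫ ξ, (Real.exp (t * (G ξ - E)) * ∫ z, Real.exp (t * (g (Fin.cons ξ z) - G ξ)) ∂ν) ∂(μ 0) := by
    rw [hchg (fun x => Real.exp (t * (g x - E)))]
    rw [integral_prod]
    · congr 1
      funext ξ
      rw [← integral_const_mul]
      congr 1
      funext z
      rw [← Real.exp_add]
      congr 1
      ring
    · apply integrable_of_bdd' (C := C)
      · exact (((hcons_meas.sub measurable_const).const_mul t).exp).aestronglyMeasurable
      · intro p; rw [abs_of_nonneg (Real.exp_nonneg _)]; exact hexp_bdd _ _ (hB _) hEbdd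
  rw [hmain]
  have hstep1 : ∫ ξ, (Real.exp (t * (G ξ - E)) * ∫ z, Real.exp (t * (g (Fin.cons ξ z) - G ξ)) ∂ν) ∂(μ 0)
      ≤ ∫ ξ, Real.exp (t * (G ξ - E)) * Real.exp (t^2 * w₁ / 8) ∂(μ 0) := by
    apply integral_mono_of_nonneg
    · apply ae_of_all
      intro ξ
      exact mul_nonneg (Real.exp_nonneg _) (integral_nonneg (fun z => Real.exp_nonneg _))
    · apply Integrable.mul_const
      apply integrable_of_bdd' (C := C)
      · exact (Real.continuous_exp.comp_stronglyMeasurable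
          ((hGsm.sub stronglyMeasurable_const).const_mul t)).aestronglyMeasurable
      · intro ξ; rw [abs_of_nonneg (Real.exp_nonneg _)]; exact hexp_bdd _ _ (hGbdd ξ) hEbdd
    · apply ae_of_all
      intro ξ
      exact mul_le_mul_of_nonneg_left (hrest ξ) (Real.exp_nonneg _)
  refine (hstep1.trans ?_)
  rw [integral_mul_const]
  calc (∫ ξ, Real.exp (t * (G ξ - E)) ∂(μ 0)) * Real.exp (t^2 * w₁/8)
      ≤ Real.exp (t^2 * w₀/8) * Real.exp (t^2 * w₁/8) := by
        apply mul_le_mul_of_nonneg_right _ (Real.exp_nonneg _)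
        have := hfirst
        rw [← hEg] at this
        exact this
    _ = Real.exp (t^2 * (w₀ + w₁) / 8) := by rw [← Real.exp_add]; congr 1; ring

lemma sg_pi_osc : ∀ (M : ℕ) (Ω : Fin M → Type u) [∀ i, MeasurableSpace (Ω i)]
    (μ : ∀ i, Measure (Ω i)) [∀ i, IsProbabilityMeasure (μ i)]
    (g : (∀ i, Ω i) → ℝ), Measurable g → ∀ (B : ℝ), (∀ x, |g x| ≤ B) →
    ∀ (c : Fin M → ℝ),
    (∀ (i : Fin M) (x : ∀ j, Ω j) (ξ ξ' : Ω i),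
      g (Function.update x i ξ) - g (Function.update x i ξ') ≤ c i) →
    ∀ (t : ℝ),
    ∫ x, Real.exp (t * (g x - ∫ x', g x' ∂(Measure.pi μ))) ∂(Measure.pi μ)
      ≤ Real.exp (t^2 * (∑ i, c i ^ 2) / 8) := by
  intro M
  induction M with
  | zero =>
    intro Ω _ μ _ g hg B hB c hosc t
    have hgc : g = fun _ => g (fun i => i.elim0) :=
      funext (fun x => congrArg g (funext (fun i => i.elim0)))
    rw [hgc]
    rw [integral_const, probReal_univ]
    simp
  | succ M ih =>
    intro Ω _ μ _ g hg B hB c hosc t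
    haveI : ∀ i, Nonempty (Ω i) := fun i => nonempty_of_prob (μ i)
    set ν : Measure (∀ j : Fin M, Ω j.succ) := Measure.pi fun j : Fin M => μ j.succ with hν
    set e := MeasurableEquiv.piFinSuccAbove Ω 0 with he
    have hcons_eq : (fun p : Ω 0 × (∀ j : Fin M, Ω j.succ) => g (Fin.cons p.1 p.2)) = g ∘ ⇑e.symm := by
      rw [he, piFinSuccAbove_symm_eq]; rfl
    have hcons_meas : Measurable (fun p : Ω 0 × (∀ j : Fin M, Ω j.succ) => g (Fin.cons p.1 p.2)) := by
      rw [hcons_eq]; exact hg.comp e.symm.measurable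
    have hsec_meas : ∀ ξ : Ω 0, Measurable (fun z => g (Fin.cons ξ z)) :=
      fun ξ => hcons_meas.comp measurable_prodMk_left
    have hrest : ∀ ξ : Ω 0, ∫ z, Real.exp (t * (g (Fin.cons ξ z) - ∫ z', g (Fin.cons ξ z') ∂ν)) ∂ν
        ≤ Real.exp (t^2 * (∑ j : Fin M, c j.succ ^ 2) / 8) := by
      intro ξ
      refine ih (fun j => Ω j.succ) (fun j => μ j.succ) (fun z => g (Fin.cons ξ z))
        (hsec_meas ξ) B (fun z => hB _) (fun j => c j.succ) ?_ t
      intro j z ζ ζ'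
      show g (Fin.cons ξ (Function.update z j ζ)) - g (Fin.cons ξ (Function.update z j ζ')) ≤ c j.succ
      rw [Fin.cons_update, Fin.cons_update]
      exact hosc j.succ (Fin.cons ξ z) ζ ζ'
    have hfirst : ∫ ξ, Real.exp (t * ((∫ z, g (Fin.cons ξ z) ∂ν) -
        ∫ ξ', (∫ z, g (Fin.cons ξ' z) ∂ν) ∂(μ 0))) ∂(μ 0) ≤ Real.exp (t^2 * (c 0 ^ 2) / 8) := by
      have hZmeas : Measurable (fun ξ : Ω 0 => ∫ z, g (Fin.cons ξ z) ∂ν) :=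
        (hcons_meas.stronglyMeasurable).integral_prod_right'.measurable
      have hZosc : ∀ ξ ξ' : Ω 0, (∫ z, g (Fin.cons ξ z) ∂ν) - (∫ z, g (Fin.cons ξ' z) ∂ν) ≤ c 0 := by
        intro ξ ξ'
        rw [← integral_sub (integrable_of_bdd' (hsec_meas ξ).aestronglyMeasurable (fun z => hB _))
          (integrable_of_bdd' (hsec_meas ξ').aestronglyMeasurable (fun z => hB _))]
        calc ∫ z, (g (Fin.cons ξ z) - g (Fin.cons ξ' z)) ∂ν ≤ ∫ _, c 0 ∂ν := by
              apply integral_mono _ (integrable_const _)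
              · intro z
                have h1 : Function.update (Fin.cons ξ' z) 0 ξ = Fin.cons ξ z := Fin.update_cons_zero ξ' z ξ
                have h2 : Function.update (Fin.cons ξ' z) 0 ξ' = Fin.cons ξ' z := Fin.update_cons_zero ξ' z ξ'
                have := hosc 0 (Fin.cons ξ' z) ξ ξ'
                rwa [h1, h2] at this
              · exact (integrable_of_bdd' (hsec_meas ξ).aestronglyMeasurable (fun z => hB _)).sub
                  (integrable_of_bdd' (hsec_meas ξ').aestronglyMeasurable (fun z => hB _))
        _ = c 0 := by rw [integral_const, probReal_univ]; simp
      exact hoeffding_centered (μ 0) _ hZmeas (c 0) t hZosc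
    have := sg_step μ g hg B hB t (c 0 ^ 2) (∑ j : Fin M, c j.succ ^ 2) hrest hfirst
    rw [Fin.sum_univ_succ]
    exact this

lemma sg_nested : ∀ (M : ℕ) {X : Type u} [MeasurableSpace X]
    (Pm : Fin M → Measure X) (hPm : ∀ i, IsProbabilityMeasure (Pm i)) (k : Fin M → ℕ)
    (g : (∀ i : Fin M, Fin (k i) → X) → ℝ), Measurable g → ∀ (B : ℝ), (∀ x, |g x| ≤ B) →
    ∀ (c : Fin M → ℝ),
    (∀ (i : Fin M) (x : ∀ j, Fin (k j) → X) (ξ : Fin (k i) → X) (a : Fin (k i)) (s s' : X),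
      g (Function.update x i (Function.update ξ a s))
        - g (Function.update x i (Function.update ξ a s')) ≤ c i) →
    ∀ (t : ℝ),
    ∫ x, Real.exp (t * (g x - ∫ x', g x' ∂(Measure.pi fun i => Measure.pi fun _ : Fin (k i) => Pm i)))
        ∂(Measure.pi fun i => Measure.pi fun _ : Fin (k i) => Pm i)
      ≤ Real.exp (t^2 * (∑ i, (k i : ℝ) * c i ^ 2) / 8) := by
  intro M
  induction M with
  | zero =>
    intro X _ Pm hPm k g hg B hB c hosc t
    have hgc : g = fun _ => g (fun i => i.elim0) :=
      funext (fun x => congrArg g (funext (fun i => i.elim0)))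
    rw [hgc]
    rw [integral_const, probReal_univ]
    simp
  | succ M ih =>
    intro X _ Pm hPm k g hg B hB c hosc t
    haveI := hPm
    set Ω : Fin (M+1) → Type u := fun i => Fin (k i) → X with hΩ
    set μ : ∀ i, Measure (Ω i) := fun i => Measure.pi fun _ : Fin (k i) => Pm i with hμ
    haveI : ∀ i, IsProbabilityMeasure (μ i) := fun i => by
      rw [hμ]; infer_instance
    haveI : ∀ i, Nonempty (Ω i) := fun i => nonempty_of_prob (μ i)
    set ν : Measure (∀ j : Fin M, Ω j.succ) := Measure.pi fun j : Fin M => μ j.succ with hν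
    set e := MeasurableEquiv.piFinSuccAbove Ω 0 with he
    have hcons_eq : (fun p : Ω 0 × (∀ j : Fin M, Ω j.succ) => g (Fin.cons p.1 p.2)) = g ∘ ⇑e.symm := by
      rw [he, piFinSuccAbove_symm_eq]; rfl
    have hcons_meas : Measurable (fun p : Ω 0 × (∀ j : Fin M, Ω j.succ) => g (Fin.cons p.1 p.2)) := by
      rw [hcons_eq]; exact hg.comp e.symm.measurable
    have hsec_meas : ∀ ξ : Ω 0, Measurable (fun z => g (Fin.cons ξ z)) :=
      fun ξ => hcons_meas.comp measurable_prodMk_left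
    have hrest : ∀ ξ : Ω 0, ∫ z, Real.exp (t * (g (Fin.cons ξ z) - ∫ z', g (Fin.cons ξ z') ∂ν)) ∂ν
        ≤ Real.exp (t^2 * (∑ j : Fin M, (k j.succ : ℝ) * c j.succ ^ 2) / 8) := by
      intro ξ
      refine ih (fun j => Pm j.succ) (fun j => hPm j.succ) (fun j => k j.succ)
        (fun z => g (Fin.cons ξ z)) (hsec_meas ξ) B (fun z => hB _) (fun j => c j.succ) ?_ t
      intro j z ζ a s s'
      show g (Fin.cons ξ (Function.update z j (Function.update ζ a s)))
        - g (Fin.cons ξ (Function.update z j (Function.update ζ a s'))) ≤ c j.succ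
      rw [Fin.cons_update, Fin.cons_update]
      exact hosc j.succ (Fin.cons ξ z) ζ a s s'
    have hfirst : ∫ ξ, Real.exp (t * ((∫ z, g (Fin.cons ξ z) ∂ν) -
        ∫ ξ', (∫ z, g (Fin.cons ξ' z) ∂ν) ∂(μ 0))) ∂(μ 0)
        ≤ Real.exp (t^2 * ((k 0 : ℝ) * c 0 ^ 2) / 8) := by
      set Z : Ω 0 → ℝ := fun ξ => ∫ z, g (Fin.cons ξ z) ∂ν with hZ
      have hZmeas : Measurable Z :=
        (hcons_meas.stronglyMeasurable).integral_prod_right'.measurable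
      have hZbdd : ∀ ξ, |Z ξ| ≤ B := by
        intro ξ
        calc |Z ξ| = ‖∫ z, g (Fin.cons ξ z) ∂ν‖ := rfl
          _ ≤ B * (ν Set.univ).toReal :=
              norm_integral_le_of_norm_le_const (ae_of_all _ (fun z => by simpa using hB _))
          _ = B := by rw [measure_univ]; simp
      have hZosc : ∀ (a : Fin (k 0)) (ξ : Fin (k 0) → X) (s s' : X),
          Z (Function.update ξ a s) - Z (Function.update ξ a s') ≤ c 0 := by
        intro a ξ s s'
        rw [hZ]
        simp only
        rw [← integral_sub (integrable_of_bdd' (hsec_meas _).aestronglyMeasurable (fun z => hB _))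
          (integrable_of_bdd' (hsec_meas _).aestronglyMeasurable (fun z => hB _))]
        calc ∫ z, (g (Fin.cons (Function.update ξ a s) z) - g (Fin.cons (Function.update ξ a s') z)) ∂ν
            ≤ ∫ _, c 0 ∂ν := by
              apply integral_mono _ (integrable_const _)
              · intro z
                have h1 := Fin.update_cons_zero (α := Ω) ξ z (Function.update ξ a s)
                have h2 := Fin.update_cons_zero (α := Ω) ξ z (Function.update ξ a s')
                have := hosc 0 (Fin.cons ξ z) ξ a s s'
                rwa [h1, h2] at this
              · exact (integrable_of_bdd' (hsec_meas _).aestronglyMeasurable (fun z => hB _)).sub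
                  (integrable_of_bdd' (hsec_meas _).aestronglyMeasurable (fun z => hB _))
        _ = c 0 := by rw [integral_const, probReal_univ]; simp
      have := sg_pi_osc (k 0) (fun _ => X) (fun _ => Pm 0) Z hZmeas B hZbdd (fun _ => c 0)
        (fun a ξ s s' => hZosc a ξ s s') t
      calc ∫ ξ, Real.exp (t * (Z ξ - ∫ ξ', Z ξ' ∂(μ 0))) ∂(μ 0)
          ≤ Real.exp (t^2 * (∑ _a : Fin (k 0), c 0 ^ 2) / 8) := this
        _ = Real.exp (t^2 * ((k 0 : ℝ) * c 0 ^ 2) / 8) := by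
            congr 2
            rw [Finset.sum_const, card_univ]
            simp [nsmul_eq_mul]
    have := sg_step μ g hg B hB t ((k 0 : ℝ) * c 0 ^ 2) (∑ j : Fin M, (k j.succ : ℝ) * c j.succ ^ 2) hrest hfirst
    rw [Fin.sum_univ_succ]
    exact this

lemma chernoff {Ω : Type*} [MeasurableSpace Ω] (μ : Measure Ω) [IsProbabilityMeasure μ]
    (g : Ω → ℝ) (hg : Measurable g) (B : ℝ) (hB : ∀ x, |g x| ≤ B)
    (S : ℝ) (hS : 0 < S)
    (hmgf : ∀ t : ℝ, ∫ x, Real.exp (t * (g x - ∫ x', g x' ∂μ)) ∂μ ≤ Real.exp (t^2 * S / 8))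
    (ε : ℝ) (hε : 0 < ε) :
    μ {x | g x - ∫ x', g x' ∂μ ≥ ε} ≤ ENNReal.ofReal (Real.exp (-(2*ε^2) / S)) := by
  set E : ℝ := ∫ x', g x' ∂μ with hE
  have hEbdd : |E| ≤ B := by
    rw [hE]
    calc |∫ x', g x' ∂μ| = ‖∫ x', g x' ∂μ‖ := rfl
      _ ≤ B * (μ Set.univ).toReal :=
          norm_integral_le_of_norm_le_const (ae_of_all _ (fun x => by simpa using hB x))
      _ = B := by rw [measure_univ]; simp
  set t : ℝ := 4*ε/S with ht
  have htpos : 0 < t := by positivity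
  set f : Ω → ℝ := fun x => Real.exp (t * (g x - E)) with hf
  have hfint : Integrable f μ := by
    apply integrable_of_bdd' (C := Real.exp (t * (2*B)))
    · exact (((hg.sub measurable_const).const_mul t).exp).aestronglyMeasurable
    · intro x
      rw [abs_of_nonneg (Real.exp_nonneg _)]
      apply Real.exp_le_exp.2
      apply mul_le_mul_of_nonneg_left _ htpos.le
      calc g x - E ≤ |g x - E| := le_abs_self _
        _ ≤ |g x| + |E| := abs_sub _ _
        _ ≤ 2*B := by linarith [hB x]
  have hmarkov := mul_meas_ge_le_integral_of_nonneg
    (ae_of_all μ (fun x => Real.exp_nonneg _ : ∀ x, 0 ≤ f x)) hfint (Real.exp (t*ε))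
  have hsub : {x | g x - E ≥ ε} ⊆ {x | Real.exp (t*ε) ≤ f x} := by
    intro x hx
    simp only [Set.mem_setOf_eq] at *
    exact Real.exp_le_exp.2 (mul_le_mul_of_nonneg_left hx htpos.le)
  have hne : μ {x | Real.exp (t*ε) ≤ f x} ≠ ⊤ := measure_ne_top μ _
  have h1 : (μ {x | g x - E ≥ ε}).toReal ≤ (μ {x | Real.exp (t*ε) ≤ f x}).toReal :=
    ENNReal.toReal_mono hne (measure_mono hsub)
  have h2 : (μ {x | Real.exp (t*ε) ≤ f x}).toReal ≤ Real.exp (t^2*S/8) / Real.exp (t*ε) := by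
    rw [le_div_iff₀ (Real.exp_pos _)]
    calc (μ {x | Real.exp (t*ε) ≤ f x}).toReal * Real.exp (t*ε)
        = Real.exp (t*ε) * (μ {x | Real.exp (t*ε) ≤ f x}).toReal := by ring
      _ ≤ ∫ x, f x ∂μ := hmarkov
      _ ≤ Real.exp (t^2*S/8) := hmgf t
  have h3 : Real.exp (t^2*S/8) / Real.exp (t*ε) = Real.exp (-(2*ε^2)/S) := by
    rw [← Real.exp_sub]
    congr 1
    rw [ht]
    field_simp
    ring
  have h4 : (μ {x | g x - E ≥ ε}).toReal ≤ Real.exp (-(2*ε^2)/S) := by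
    rw [← h3]; exact h1.trans h2
  calc μ {x | g x - E ≥ ε} = ENNReal.ofReal ((μ {x | g x - E ≥ ε}).toReal) :=
        (ENNReal.ofReal_toReal (measure_ne_top μ _)).symm
    _ ≤ ENNReal.ofReal (Real.exp (-(2*ε^2)/S)) := ENNReal.ofReal_le_ofReal h4

lemma sum_update_sub {X : Type*} {N : ℕ} (φ : X → ℝ) (ξ : Fin N → X) (a0 : Fin N) (s s' : X) :
    (∑ b, φ (Function.update ξ a0 s b)) - (∑ b, φ (Function.update ξ a0 s' b)) = φ s - φ s' := by
  have h : ∀ v : X, ∑ b, φ (Function.update ξ a0 v b) = φ v + ∑ b ∈ univ \ {a0}, φ (ξ b) := by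
    intro v
    have heq : (fun b => φ (Function.update ξ a0 v b)) = Function.update (fun b => φ (ξ b)) a0 (φ v) := by
      funext b; by_cases hb : b = a0
      · subst hb; simp
      · simp [Function.update_of_ne hb]
    rw [heq, Finset.sum_update_of_mem (mem_univ a0)]
  rw [h s, h s']; ring

lemma key_sum {m : ℕ} (α : Fin m → ℝ) (hα0 : ∀ i, 0 ≤ α i) (hα1 : ∑ i, α i = 1)
    (i0 : Fin m) (D : Fin m → Fin m → ℝ) (C : ℝ)
    (h00 : ∀ j l, j ≠ i0 → l ≠ i0 → D j l = 0)
    (hji : ∀ j, j ≠ i0 → D j i0 ≤ C)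
    (hil : ∀ l, l ≠ i0 → D i0 l ≤ C)
    (hii : D i0 i0 ≤ 2*C) :
    ∑ j, ∑ l, α j * α l * D j l ≤ 2 * α i0 * C := by
  have hsum_erase : ∑ j ∈ univ.erase i0, α j = 1 - α i0 := by
    rw [Finset.sum_erase_eq_sub (mem_univ i0), hα1]
  have step1 : ∑ j, ∑ l, α j * α l * D j l
      = (α i0 * α i0 * D i0 i0 + ∑ l ∈ univ.erase i0, α i0 * α l * D i0 l)
        + ∑ j ∈ univ.erase i0, α j * α i0 * D j i0 := by
    rw [← Finset.add_sum_erase _ (fun j => ∑ l, α j * α l * D j l) (mem_univ i0)]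
    congr 1
    · exact (Finset.add_sum_erase _ (fun l => α i0 * α l * D i0 l) (mem_univ i0)).symm
    · apply Finset.sum_congr rfl
      intro j hj
      rw [← Finset.add_sum_erase _ (fun l => α j * α l * D j l) (mem_univ i0)]
      have hz : ∑ l ∈ univ.erase i0, α j * α l * D j l = 0 := by
        apply Finset.sum_eq_zero
        intro l hl
        rw [h00 j l (mem_erase.1 hj).1 (mem_erase.1 hl).1]
        ring
      rw [hz, add_zero]
  rw [step1]
  have b1 : α i0 * α i0 * D i0 i0 ≤ α i0 * α i0 * (2*C) :=
    mul_le_mul_of_nonneg_left hii (mul_nonneg (hα0 i0) (hα0 i0))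
  have b2 : ∑ l ∈ univ.erase i0, α i0 * α l * D i0 l ≤ α i0 * C * (1 - α i0) := by
    calc ∑ l ∈ univ.erase i0, α i0 * α l * D i0 l
        ≤ ∑ l ∈ univ.erase i0, α i0 * C * α l := by
          apply Finset.sum_le_sum
          intro l hl
          calc α i0 * α l * D i0 l ≤ α i0 * α l * C :=
                mul_le_mul_of_nonneg_left (hil l (mem_erase.1 hl).1)
                  (mul_nonneg (hα0 i0) (hα0 l))
            _ = α i0 * C * α l := by ring
      _ = α i0 * C * (1 - α i0) := by rw [← Finset.mul_sum, hsum_erase]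
  have b3 : ∑ j ∈ univ.erase i0, α j * α i0 * D j i0 ≤ α i0 * C * (1 - α i0) := by
    calc ∑ j ∈ univ.erase i0, α j * α i0 * D j i0
        ≤ ∑ j ∈ univ.erase i0, α i0 * C * α j := by
          apply Finset.sum_le_sum
          intro j hj
          calc α j * α i0 * D j i0 ≤ α j * α i0 * C :=
                mul_le_mul_of_nonneg_left (hji j (mem_erase.1 hj).1)
                  (mul_nonneg (hα0 j) (hα0 i0))
            _ = α i0 * C * α j := by ring
      _ = α i0 * C * (1 - α i0) := by rw [← Finset.mul_sum, hsum_erase]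
  calc (α i0 * α i0 * D i0 i0 + ∑ l ∈ univ.erase i0, α i0 * α l * D i0 l)
        + ∑ j ∈ univ.erase i0, α j * α i0 * D j i0
      ≤ (α i0 * α i0 * (2*C) + α i0 * C * (1 - α i0)) + α i0 * C * (1 - α i0) := by
        apply add_le_add (add_le_add b1 b2) b3
    _ = 2 * α i0 * C := by ring

lemma lhat_osc {X : Type*} {m : ℕ} (κ : X → X → ℝ) (f : X → ℝ) (κ0 κ1 f0 f1 : ℝ)
    (hκbdd : ∀ x y, κ x y ∈ Set.Icc κ0 κ1) (hfbdd : ∀ y, f y ∈ Set.Icc f0 f1)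
    (n : Fin m → ℕ) (hn : ∀ i, 1 ≤ n i)
    (α : Fin m → ℝ) (hα0 : ∀ i, 0 ≤ α i) (hα1 : ∑ i, α i = 1)
    (i0 : Fin m) (x : (i : Fin m) → Fin (n i) → X) (ξ : Fin (n i0) → X)
    (a0 : Fin (n i0)) (s s' : X) :
    Lhat κ f n α (Function.update x i0 (Function.update ξ a0 s))
      - Lhat κ f n α (Function.update x i0 (Function.update ξ a0 s'))
      ≤ α i0 * (2*(κ1 - κ0) + (f1 - f0)) / (n i0 : ℝ) := by
  have hΔκ : 0 ≤ κ1 - κ0 := by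
    rcases hκbdd s s with ⟨h1, h2⟩; linarith
  have hΔf : 0 ≤ f1 - f0 := by
    rcases hfbdd s with ⟨h1, h2⟩; linarith
  set u : Fin (n i0) → X := Function.update ξ a0 s with hu
  set u' : Fin (n i0) → X := Function.update ξ a0 s' with hu'
  set y : (i : Fin m) → Fin (n i) → X := Function.update x i0 u with hy
  set y' : (i : Fin m) → Fin (n i) → X := Function.update x i0 u' with hy'
  have hyj : ∀ j, j ≠ i0 → y j = x j := fun j hj => Function.update_of_ne hj _ _
  have hy'j : ∀ j, j ≠ i0 → y' j = x j := fun j hj => Function.update_of_ne hj _ _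
  have hyi : y i0 = u := Function.update_self _ _ _
  have hy'i : y' i0 = u' := Function.update_self _ _ _
  have hκdiff : ∀ w w' v v' : X, κ w v - κ w' v' ≤ κ1 - κ0 := by
    intro w w' v v'
    rcases hκbdd w v with ⟨h1, h2⟩
    rcases hκbdd w' v' with ⟨h3, h4⟩
    linarith
  have hNpos : ∀ i : Fin m, (0:ℝ) < (n i : ℝ) := by
    intro i; exact_mod_cast Nat.lt_of_lt_of_le Nat.zero_lt_one (hn i)
  have hne : ∀ i : Fin m, ((n i : ℝ)) ≠ 0 := fun i => (hNpos i).ne'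
  -- Khat difference bounds
  have hK00 : ∀ j l, j ≠ i0 → l ≠ i0 → Khat κ n y j l - Khat κ n y' j l = 0 := by
    intro j l hj hl
    unfold Khat
    rw [hyj j hj, hy'j j hj, hyj l hl, hy'j l hl]
    ring
  have hKji : ∀ j, j ≠ i0 → Khat κ n y j i0 - Khat κ n y' j i0 ≤ (κ1 - κ0) / (n i0 : ℝ) := by
    intro j hj
    unfold Khat
    rw [hyj j hj, hy'j j hj, hyi, hy'i]
    rw [← mul_sub, ← Finset.sum_sub_distrib]
    have heq : ∀ a : Fin (n j), (∑ b, κ (x j a) (u b)) - (∑ b, κ (x j a) (u' b))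
        = κ (x j a) s - κ (x j a) s' := fun a => sum_update_sub (fun v => κ (x j a) v) ξ a0 s s'
    calc (1 / ((n j : ℝ) * (n i0 : ℝ))) * ∑ a, ((∑ b, κ (x j a) (u b)) - (∑ b, κ (x j a) (u' b)))
        = (1 / ((n j : ℝ) * (n i0 : ℝ))) * ∑ a, (κ (x j a) s - κ (x j a) s') := by
          congr 1; exact Finset.sum_congr rfl (fun a _ => heq a)
      _ ≤ (1 / ((n j : ℝ) * (n i0 : ℝ))) * ((n j : ℝ) * (κ1 - κ0)) := by
          apply mul_le_mul_of_nonneg_left _ (by positivity)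
          calc ∑ a, (κ (x j a) s - κ (x j a) s') ≤ ∑ _a : Fin (n j), (κ1 - κ0) :=
                Finset.sum_le_sum (fun a _ => hκdiff _ _ _ _)
            _ = (n j : ℝ) * (κ1 - κ0) := by simp [mul_comm]; ring
      _ = (κ1 - κ0) / (n i0 : ℝ) := by
          rw [div_mul_eq_mul_div, one_mul, mul_comm ((n j : ℝ)) ((n i0 : ℝ)), mul_comm ((n j : ℝ)) (κ1 - κ0)]
          exact mul_div_mul_right _ _ (hne j)
  have hKil : ∀ l, l ≠ i0 → Khat κ n y i0 l - Khat κ n y' i0 l ≤ (κ1 - κ0) / (n i0 : ℝ) := by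
    intro l hl
    unfold Khat
    rw [hyj l hl, hy'j l hl, hyi, hy'i]
    rw [← mul_sub]
    rw [Finset.sum_comm (γ := Fin (n i0)), Finset.sum_comm (s := univ (α := Fin (n i0)))]
    rw [← Finset.sum_sub_distrib]
    have heq : ∀ b : Fin (n l), (∑ a, κ (u a) (x l b)) - (∑ a, κ (u' a) (x l b))
        = κ s (x l b) - κ s' (x l b) := fun b => sum_update_sub (fun v => κ v (x l b)) ξ a0 s s'
    calc (1 / ((n i0 : ℝ) * (n l : ℝ))) * ∑ b, ((∑ a, κ (u a) (x l b)) - (∑ a, κ (u' a) (x l b)))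
        = (1 / ((n i0 : ℝ) * (n l : ℝ))) * ∑ b, (κ s (x l b) - κ s' (x l b)) := by
          congr 1; exact Finset.sum_congr rfl (fun b _ => heq b)
      _ ≤ (1 / ((n i0 : ℝ) * (n l : ℝ))) * ((n l : ℝ) * (κ1 - κ0)) := by
          apply mul_le_mul_of_nonneg_left _ (by positivity)
          calc ∑ b, (κ s (x l b) - κ s' (x l b)) ≤ ∑ _b : Fin (n l), (κ1 - κ0) :=
                Finset.sum_le_sum (fun b _ => hκdiff _ _ _ _)
            _ = (n l : ℝ) * (κ1 - κ0) := by simp [mul_comm]; ring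
      _ = (κ1 - κ0) / (n i0 : ℝ) := by
          rw [div_mul_eq_mul_div, one_mul, mul_comm ((n l : ℝ)) (κ1 - κ0)]
          exact mul_div_mul_right _ _ (hne l)
  have hKii : Khat κ n y i0 i0 - Khat κ n y' i0 i0 ≤ 2 * ((κ1 - κ0) / (n i0 : ℝ)) := by
    unfold Khat
    rw [hyi, hy'i, ← mul_sub, ← Finset.sum_sub_distrib]
    have hterm : ∀ a b : Fin (n i0), κ (u a) (u b) - κ (u' a) (u' b)
        ≤ (if a = a0 then (κ1 - κ0) else 0) + (if b = a0 then (κ1 - κ0) else 0) := by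
      intro a b
      by_cases ha : a = a0
      · rw [if_pos ha]
        have h2 : (0:ℝ) ≤ if b = a0 then (κ1 - κ0) else 0 := by
          by_cases hb : b = a0 <;> simp [hb, hΔκ]
        linarith [hκdiff (u a) (u' a) (u b) (u' b)]
      · by_cases hb : b = a0
        · simp only [if_neg ha, if_pos hb, zero_add, hb]
          have hua : u a = ξ a := Function.update_of_ne ha _ _
          have hu'a : u' a = ξ a := Function.update_of_ne ha _ _
          rw [hua, hu'a]
          exact hκdiff _ _ _ _
        · simp only [if_neg ha, if_neg hb, add_zero]
          have hua : u a = ξ a := Function.update_of_ne ha _ _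
          have hu'a : u' a = ξ a := Function.update_of_ne ha _ _
          have hub : u b = ξ b := Function.update_of_ne hb _ _
          have hu'b : u' b = ξ b := Function.update_of_ne hb _ _
          rw [hua, hu'a, hub, hu'b]
          simp
    calc (1 / ((n i0 : ℝ) * (n i0 : ℝ))) * ∑ a, ((∑ b, κ (u a) (u b)) - (∑ b, κ (u' a) (u' b)))
        = (1 / ((n i0 : ℝ) * (n i0 : ℝ))) * ∑ a, ∑ b, (κ (u a) (u b) - κ (u' a) (u' b)) := by
          congr 1
          exact Finset.sum_congr rfl (fun a _ => (Finset.sum_sub_distrib _ _).symm)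
      _ ≤ (1 / ((n i0 : ℝ) * (n i0 : ℝ))) * ((n i0 : ℝ) * (κ1 - κ0) + (n i0 : ℝ) * (κ1 - κ0)) := by
          apply mul_le_mul_of_nonneg_left _ (by positivity)
          calc ∑ a, ∑ b, (κ (u a) (u b) - κ (u' a) (u' b))
              ≤ ∑ a, ∑ b : Fin (n i0), ((if a = a0 then (κ1 - κ0) else 0) + (if b = a0 then (κ1 - κ0) else 0)) :=
                Finset.sum_le_sum (fun a _ => Finset.sum_le_sum (fun b _ => hterm a b))
            _ = (n i0 : ℝ) * (κ1 - κ0) + (n i0 : ℝ) * (κ1 - κ0) := by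
                simp [Finset.sum_add_distrib, Finset.sum_ite_eq', Finset.mul_sum]
                try ring
      _ = 2 * ((κ1 - κ0) / (n i0 : ℝ)) := by
          field_simp [hne i0]
          ring
  -- fhat difference
  have hf00 : ∀ j, j ≠ i0 → fhat f n y j - fhat f n y' j = 0 := by
    intro j hj
    unfold fhat
    rw [hyj j hj, hy'j j hj]
    ring
  have hfi : fhat f n y i0 - fhat f n y' i0 ≤ (f1 - f0) / (n i0 : ℝ) := by
    unfold fhat
    rw [hyi, hy'i, ← mul_sub, sum_update_sub f ξ a0 s s']
    calc (1 / (n i0 : ℝ)) * (f s - f s') ≤ (1 / (n i0 : ℝ)) * (f1 - f0) := by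
          apply mul_le_mul_of_nonneg_left _ (by positivity)
          rcases hfbdd s with ⟨h1, h2⟩
          rcases hfbdd s' with ⟨h3, h4⟩
          linarith
      _ = (f1 - f0) / (n i0 : ℝ) := by field_simp
  -- assemble
  have hquad : ∑ j, ∑ l, α j * α l * Khat κ n y j l - ∑ j, ∑ l, α j * α l * Khat κ n y' j l
      ≤ 2 * α i0 * ((κ1 - κ0) / (n i0 : ℝ)) := by
    rw [← Finset.sum_sub_distrib]
    have : ∀ j, (∑ l, α j * α l * Khat κ n y j l) - (∑ l, α j * α l * Khat κ n y' j l)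
        = ∑ l, α j * α l * (Khat κ n y j l - Khat κ n y' j l) := by
      intro j
      rw [← Finset.sum_sub_distrib]
      exact Finset.sum_congr rfl (fun l _ => by ring)
    rw [Finset.sum_congr rfl (fun j _ => this j)]
    exact key_sum α hα0 hα1 i0 (fun j l => Khat κ n y j l - Khat κ n y' j l) _
      hK00 hKji hKil hKii
  have hlin : ∑ j, α j * fhat f n y j - ∑ j, α j * fhat f n y' j
      ≤ α i0 * ((f1 - f0) / (n i0 : ℝ)) := by
    rw [← Finset.sum_sub_distrib]
    have heq : ∀ j, α j * fhat f n y j - α j * fhat f n y' j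
        = α j * (fhat f n y j - fhat f n y' j) := fun j => by ring
    rw [Finset.sum_congr rfl (fun j _ => heq j)]
    rw [← Finset.add_sum_erase _ _ (mem_univ i0)]
    have hz : ∑ j ∈ univ.erase i0, α j * (fhat f n y j - fhat f n y' j) = 0 := by
      apply Finset.sum_eq_zero
      intro j hj
      rw [hf00 j (mem_erase.1 hj).1, mul_zero]
    rw [hz, add_zero]
    exact mul_le_mul_of_nonneg_left hfi (hα0 i0)
  unfold Lhat
  calc (∑ j, ∑ l, α j * α l * Khat κ n y j l + ∑ j, α j * fhat f n y j)
        - (∑ j, ∑ l, α j * α l * Khat κ n y' j l + ∑ j, α j * fhat f n y' j)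
      = (∑ j, ∑ l, α j * α l * Khat κ n y j l - ∑ j, ∑ l, α j * α l * Khat κ n y' j l)
        + (∑ j, α j * fhat f n y j - ∑ j, α j * fhat f n y' j) := by ring
    _ ≤ 2 * α i0 * ((κ1 - κ0) / (n i0 : ℝ)) + α i0 * ((f1 - f0) / (n i0 : ℝ)) := add_le_add hquad hlin
    _ = α i0 * (2*(κ1 - κ0) + (f1 - f0)) / (n i0 : ℝ) := by
        field_simp [hne i0]

lemma lhat_measurable {X : Type*} [MeasurableSpace X] {m : ℕ} (κ : X → X → ℝ) (f : X → ℝ) (hκmeas : Measurable (Function.uncurry κ)) (hfmeas : Measurable f)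
    (n : Fin m → ℕ) (α : Fin m → ℝ) :
    Measurable (fun x : (i : Fin m) → Fin (n i) → X => Lhat κ f n α x) := by
  apply Measurable.add
  · apply Finset.measurable_sum
    intro i _
    apply Finset.measurable_sum
    intro j _
    apply Measurable.const_mul
    unfold Khat
    apply Measurable.const_mul
    apply Finset.measurable_sum
    intro a _
    apply Finset.measurable_sum
    intro b _
    have : (fun x : (i : Fin m) → Fin (n i) → X => κ (x i a) (x j b))
        = (Function.uncurry κ) ∘ (fun x => (x i a, x j b)) := rfl
    rw [this]
    exact hκmeas.comp (((measurable_pi_apply a).comp (measurable_pi_apply i)).prodMk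
      ((measurable_pi_apply b).comp (measurable_pi_apply j)))
  · apply Finset.measurable_sum
    intro i _
    apply Measurable.const_mul
    unfold fhat
    apply Measurable.const_mul
    apply Finset.measurable_sum
    intro a _
    exact hfmeas.comp ((measurable_pi_apply a).comp (measurable_pi_apply i))

lemma lhat_bounded {X : Type*} {m : ℕ} (κ : X → X → ℝ) (f : X → ℝ) (κ0 κ1 f0 f1 : ℝ) (hκbdd : ∀ x y, κ x y ∈ Set.Icc κ0 κ1) (hfbdd : ∀ y, f y ∈ Set.Icc f0 f1)
    (n : Fin m → ℕ) (hn : ∀ i, 1 ≤ n i) (α : Fin m → ℝ) (hα : α ∈ stdSimplex ℝ (Fin m))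
    (x : (i : Fin m) → Fin (n i) → X) :
    |Lhat κ f n α x| ≤ max |κ0| |κ1| + max |f0| |f1| := by
  have hα0 : ∀ i, 0 ≤ α i := hα.1
  have hα1 : ∑ i, α i = 1 := hα.2
  set Cκ := max |κ0| |κ1| with hCκ
  set Cf := max |f0| |f1| with hCf
  have hκC : ∀ u v, |κ u v| ≤ Cκ := by
    intro u v
    rcases hκbdd u v with ⟨h1, h2⟩
    rw [abs_le]
    constructor
    · calc -Cκ ≤ -|κ0| := by simp [hCκ]
        _ ≤ κ0 := neg_abs_le _
        _ ≤ _ := h1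
    · exact h2.trans ((le_abs_self _).trans (le_max_right _ _))
  have hfC : ∀ u, |f u| ≤ Cf := by
    intro u
    rcases hfbdd u with ⟨h1, h2⟩
    rw [abs_le]
    constructor
    · calc -Cf ≤ -|f0| := by simp [hCf]
        _ ≤ f0 := neg_abs_le _
        _ ≤ _ := h1
    · exact h2.trans ((le_abs_self _).trans (le_max_right _ _))
  have hKhat : ∀ i j, |Khat κ n x i j| ≤ Cκ := by
    intro i j
    have hni : (1:ℝ) ≤ (n i : ℝ) := by exact_mod_cast hn i
    have hnj : (1:ℝ) ≤ (n j : ℝ) := by exact_mod_cast hn j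
    unfold Khat
    rw [abs_mul]
    calc |1 / ((n i : ℝ) * (n j : ℝ))| * |∑ a, ∑ b, κ (x i a) (x j b)|
        ≤ |1 / ((n i : ℝ) * (n j : ℝ))| * ((n i : ℝ) * (n j : ℝ) * Cκ) := by
          apply mul_le_mul_of_nonneg_left _ (abs_nonneg _)
          calc |∑ a, ∑ b, κ (x i a) (x j b)| ≤ ∑ a, |∑ b, κ (x i a) (x j b)| :=
                Finset.abs_sum_le_sum_abs _ _
            _ ≤ ∑ _a : Fin (n i), ∑ _b : Fin (n j), Cκ := by
                apply Finset.sum_le_sum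
                intro a _
                calc |∑ b, κ (x i a) (x j b)| ≤ ∑ b, |κ (x i a) (x j b)| :=
                      Finset.abs_sum_le_sum_abs _ _
                  _ ≤ ∑ _b : Fin (n j), Cκ := Finset.sum_le_sum (fun b _ => hκC _ _)
            _ = (n i : ℝ) * ((n j : ℝ) * Cκ) := by simp [mul_assoc]
            _ = (n i : ℝ) * (n j : ℝ) * Cκ := by ring
      _ = Cκ := by
          rw [abs_of_pos (by positivity : (0:ℝ) < 1 / ((n i : ℝ) * (n j : ℝ)))]
          field_simp
  have hfhat : ∀ i, |fhat f n x i| ≤ Cf := by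
    intro i
    have hni : (1:ℝ) ≤ (n i : ℝ) := by exact_mod_cast hn i
    unfold fhat
    rw [abs_mul]
    calc |1 / (n i : ℝ)| * |∑ a, f (x i a)|
        ≤ |1 / (n i : ℝ)| * ((n i : ℝ) * Cf) := by
          apply mul_le_mul_of_nonneg_left _ (abs_nonneg _)
          calc |∑ a, f (x i a)| ≤ ∑ a, |f (x i a)| := Finset.abs_sum_le_sum_abs _ _
            _ ≤ ∑ _a : Fin (n i), Cf := Finset.sum_le_sum (fun a _ => hfC _)
            _ = (n i : ℝ) * Cf := by simp [mul_comm]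
      _ = Cf := by
          rw [abs_of_pos (by positivity : (0:ℝ) < 1 / (n i : ℝ))]
          field_simp
  have hCκ0 : 0 ≤ Cκ := le_trans (abs_nonneg _) (le_max_left _ _)
  have hCf0 : 0 ≤ Cf := le_trans (abs_nonneg _) (le_max_left _ _)
  unfold Lhat
  calc |∑ i, ∑ j, α i * α j * Khat κ n x i j + ∑ i, α i * fhat f n x i|
      ≤ |∑ i, ∑ j, α i * α j * Khat κ n x i j| + |∑ i, α i * fhat f n x i| := abs_add_le _ _
    _ ≤ Cκ + Cf := by
        apply add_le_add
        · calc |∑ i, ∑ j, α i * α j * Khat κ n x i j| ≤ ∑ i, |∑ j, α i * α j * Khat κ n x i j| :=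
              Finset.abs_sum_le_sum_abs _ _
            _ ≤ ∑ i, α i * Cκ := by
                apply Finset.sum_le_sum
                intro i _
                calc |∑ j, α i * α j * Khat κ n x i j| ≤ ∑ j, |α i * α j * Khat κ n x i j| :=
                      Finset.abs_sum_le_sum_abs _ _
                  _ ≤ ∑ j, α i * α j * Cκ := by
                      apply Finset.sum_le_sum
                      intro j _
                      rw [abs_mul, abs_of_nonneg (mul_nonneg (hα0 i) (hα0 j))]
                      exact mul_le_mul_of_nonneg_left (hKhat i j) (mul_nonneg (hα0 i) (hα0 j))
                  _ = α i * Cκ := by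
                      rw [← Finset.sum_mul, ← Finset.mul_sum, hα1]
                      ring
            _ = Cκ := by rw [← Finset.sum_mul, hα1, one_mul]
        · calc |∑ i, α i * fhat f n x i| ≤ ∑ i, |α i * fhat f n x i| :=
              Finset.abs_sum_le_sum_abs _ _
            _ ≤ ∑ i, α i * Cf := by
                apply Finset.sum_le_sum
                intro i _
                rw [abs_mul, abs_of_nonneg (hα0 i)]
                exact mul_le_mul_of_nonneg_left (hfhat i) (hα0 i)
            _ = Cf := by rw [← Finset.sum_mul, hα1, one_mul]

end AuxMcDiarmid

/-- McDiarmid-type concentration: for all `ε > 0`,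
`P( L̂(α;x) − E[L̂(α;x)] ≥ ε ) ≤ exp( −2ε² / (Δ_L² ∑_i α_i²/n_i) )`. -/
theorem lhat_mcdiarmid
    {X : Type*} [MeasurableSpace X] {m : ℕ}
    (P : Fin m → Measure X) (hP : ∀ i, IsProbabilityMeasure (P i))
    (κ : X → X → ℝ) (f : X → ℝ)
    (hκmeas : Measurable (Function.uncurry κ)) (hfmeas : Measurable f)
    (κ0 κ1 f0 f1 : ℝ)
    (hκbdd : ∀ x y, κ x y ∈ Set.Icc κ0 κ1) (hfbdd : ∀ y, f y ∈ Set.Icc f0 f1)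
    (hκsymm : ∀ x y, κ x y = κ y x)
    (n : Fin m → ℕ) (hn : ∀ i, 1 ≤ n i)
    (α : Fin m → ℝ) (hα : α ∈ stdSimplex ℝ (Fin m))
    (ε : ℝ) (hε : 0 < ε) :
    sampleMeasure P n
      {x | Lhat κ f n α x - (∫ y, Lhat κ f n α y ∂(sampleMeasure P n)) ≥ ε} ≤
      ENNReal.ofReal
        (Real.exp (-(2 * ε ^ 2) /
          ((2 * (κ1 - κ0) + (f1 - f0)) ^ 2 * ∑ i, α i ^ 2 / (n i : ℝ)))) := by
  classical
  haveI := hP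
  haveI hprob : IsProbabilityMeasure (sampleMeasure P n) := by
    unfold sampleMeasure; infer_instance
  have hα0 : ∀ i, 0 ≤ α i := hα.1
  have hα1 : ∑ i, α i = 1 := hα.2
  -- m > 0 and X nonempty
  have hm : 0 < m := by
    by_contra h
    push_neg at h
    interval_cases m
    · simp at hα1
  haveI hXne : Nonempty X := nonempty_of_prob (P ⟨0, hm⟩)
  obtain ⟨x0⟩ := id hXne
  have hΔκ : 0 ≤ κ1 - κ0 := by rcases hκbdd x0 x0 with ⟨h1, h2⟩; linarith
  have hΔf : 0 ≤ f1 - f0 := by rcases hfbdd x0 with ⟨h1, h2⟩; linarith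
  set ΔL : ℝ := 2*(κ1 - κ0) + (f1 - f0) with hΔL
  set T : ℝ := ∑ i, α i ^ 2 / (n i : ℝ) with hT
  have hNpos : ∀ i : Fin m, (0:ℝ) < (n i : ℝ) := by
    intro i; exact_mod_cast Nat.lt_of_lt_of_le Nat.zero_lt_one (hn i)
  have hTpos : 0 < T := by
    have hex : ∃ i, 0 < α i := by
      by_contra h
      push_neg at h
      have : ∀ i, α i = 0 := fun i => le_antisymm (h i) (hα0 i)
      rw [Finset.sum_congr rfl (fun i _ => this i)] at hα1
      simp at hα1
    obtain ⟨i, hi⟩ := hex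
    rw [hT]
    apply Finset.sum_pos' (fun j _ => by positivity)
    exact ⟨i, Finset.mem_univ i, div_pos (pow_pos hi 2) (hNpos i)⟩
  rcases eq_or_lt_of_le (by positivity : (0:ℝ) ≤ ΔL^2 * T) with hS | hS
  · -- degenerate case: denominator zero
    calc sampleMeasure P n {x | Lhat κ f n α x - (∫ y, Lhat κ f n α y ∂(sampleMeasure P n)) ≥ ε}
        ≤ 1 := prob_le_one
      _ = ENNReal.ofReal (Real.exp (-(2 * ε ^ 2) / (ΔL ^ 2 * T))) := by
          rw [← hS, div_zero, Real.exp_zero, ENNReal.ofReal_one]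
  · -- main case
    set B : ℝ := max |κ0| |κ1| + max |f0| |f1| with hB
    have hgB : ∀ x, |Lhat κ f n α x| ≤ B := fun x =>
      lhat_bounded κ f κ0 κ1 f0 f1 hκbdd hfbdd n hn α hα x
    have hgmeas : Measurable (fun x : (i : Fin m) → Fin (n i) → X => Lhat κ f n α x) :=
      lhat_measurable κ f hκmeas hfmeas n α
    have hmgf : ∀ t : ℝ, ∫ x, Real.exp (t * (Lhat κ f n α x -
        ∫ x', Lhat κ f n α x' ∂(sampleMeasure P n))) ∂(sampleMeasure P n)
        ≤ Real.exp (t^2 * (ΔL^2 * T) / 8) := by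
      intro t
      have hosc : ∀ (i : Fin m) (x : ∀ j, Fin (n j) → X) (ξ : Fin (n i) → X)
          (a : Fin (n i)) (s s' : X),
          Lhat κ f n α (Function.update x i (Function.update ξ a s))
            - Lhat κ f n α (Function.update x i (Function.update ξ a s'))
            ≤ α i * ΔL / (n i : ℝ) := by
        intro i x ξ a s s'
        exact lhat_osc κ f κ0 κ1 f0 f1 hκbdd hfbdd n hn α hα0 hα1 i x ξ a s s'
      have := sg_nested m P hP n (fun x => Lhat κ f n α x) hgmeas B hgB
        (fun i => α i * ΔL / (n i : ℝ)) hosc t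
      have hsum : ∑ i, (n i : ℝ) * (α i * ΔL / (n i : ℝ)) ^ 2 = ΔL^2 * T := by
        rw [hT, Finset.mul_sum]
        apply Finset.sum_congr rfl
        intro i _
        have hni : ((n i : ℝ)) ≠ 0 := (hNpos i).ne'
        field_simp
      rw [hsum] at this
      exact this
    have := chernoff (sampleMeasure P n) (fun x => Lhat κ f n α x) hgmeas B hgB
      (ΔL^2 * T) hS hmgf ε hε
    exact this
end
end

section
/- Fix n_1,…,n_m ≥ 1, δ > 0, and samples x. Suppose that (i) for every i ∈ [m], f_i + K_{ii} − f̂_i(x) − K̂_{ii}(x) ≤ Δ_L √(log(1/δ)/(2 n_i)) + Δ_κ/n_i, and (ii) for every i ≠ j, (f_i + f_j)/2 + K_{ij} − (f̂_i(x) + f̂_j(x))/2 − K̂_{ij}(x) ≤ Δ_L √( (log(1/δ)/8)(n_i^{-1} + n_j^{-1}) ). Then for every probability vector α, L(α) − L̂(α; x) ≤ ∑_{i=1}^m ( Δ_L √(log(1/δ)/(2 n_i)) + Δ_κ/n_i ) α_i. -/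
open MeasureTheory Finset

noncomputable section

private lemma sqrt_add_le' {a b : ℝ} (ha : 0 ≤ a) (hb : 0 ≤ b) :
    Real.sqrt (a + b) ≤ Real.sqrt a + Real.sqrt b := by
  have h1 := Real.sq_sqrt ha
  have h2 := Real.sq_sqrt hb
  have h3 := Real.sqrt_nonneg a
  have h4 := Real.sqrt_nonneg b
  calc Real.sqrt (a + b) ≤ Real.sqrt ((Real.sqrt a + Real.sqrt b) ^ 2) :=
        Real.sqrt_le_sqrt (by nlinarith [mul_nonneg h3 h4])
    _ = Real.sqrt a + Real.sqrt b := Real.sqrt_sq (by positivity)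

private lemma quarter_sqrt {c t : ℝ} (hc : 0 ≤ c) (ht : 0 < t) :
    Real.sqrt (c / 8 * t⁻¹) = Real.sqrt (c / (2 * t)) / 2 := by
  have h4 : Real.sqrt 4 = 2 := by
    rw [show (4 : ℝ) = 2 ^ 2 by norm_num, Real.sqrt_sq (by norm_num)]
  rw [show c / 8 * t⁻¹ = (c / (2 * t)) / 4 by
      rw [div_div, div_mul_eq_div_div, div_div]; ring,
    Real.sqrt_div (by positivity), h4]

/-- Deterministic combination step: if the diagonal and off-diagonal deviation bounds hold
for the samples `x`, then for every probability vector `α`,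
`L(α) − L̂(α;x) ≤ ∑_i (Δ_L √(log(1/δ)/(2n_i)) + Δ_κ/n_i) α_i`. -/
theorem deviation_combination
    {X : Type*} [MeasurableSpace X] {m : ℕ}
    (P : Fin m → Measure X) (hP : ∀ i, IsProbabilityMeasure (P i))
    (κ : X → X → ℝ) (f : X → ℝ)
    (hκmeas : Measurable (Function.uncurry κ)) (hfmeas : Measurable f)
    (κ0 κ1 f0 f1 : ℝ)
    (hκbdd : ∀ x y, κ x y ∈ Set.Icc κ0 κ1) (hfbdd : ∀ y, f y ∈ Set.Icc f0 f1)
    (hκsymm : ∀ x y, κ x y = κ y x)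
    (n : Fin m → ℕ) (hn : ∀ i, 1 ≤ n i)
    (δ : ℝ) (hδ : 0 < δ)
    (x : (i : Fin m) → Fin (n i) → X)
    (hdiag : ∀ i : Fin m,
      fpop P f i + Kpop P κ i i - fhat f n x i - Khat κ n x i i ≤
        (2 * (κ1 - κ0) + (f1 - f0)) * Real.sqrt (Real.log (1 / δ) / (2 * (n i : ℝ)))
          + (κ1 - κ0) / (n i : ℝ))
    (hoff : ∀ i j : Fin m, i ≠ j →
      (fpop P f i + fpop P f j) / 2 + Kpop P κ i j
          - (fhat f n x i + fhat f n x j) / 2 - Khat κ n x i j ≤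
        (2 * (κ1 - κ0) + (f1 - f0)) *
          Real.sqrt (Real.log (1 / δ) / 8 * ((n i : ℝ)⁻¹ + (n j : ℝ)⁻¹))) :
    ∀ α ∈ stdSimplex ℝ (Fin m),
      Lpop P κ f α - Lhat κ f n α x ≤
        ∑ i, ((2 * (κ1 - κ0) + (f1 - f0)) * Real.sqrt (Real.log (1 / δ) / (2 * (n i : ℝ)))
          + (κ1 - κ0) / (n i : ℝ)) * α i := by
  intro α hα
  obtain ⟨hα0, hα1⟩ := hα
  set c := Real.log (1 / δ) with hc
  rcases Nat.eq_zero_or_pos m with hm | hm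
  · subst hm
    simp [Lpop, Lhat]
  -- nonemptiness of X and basic nonnegativity facts
  have i0 : Fin m := ⟨0, hm⟩
  have hX : Nonempty X := by
    by_contra h
    haveI := hP i0
    have h1 : (P i0) Set.univ = 1 := measure_univ
    rw [Set.univ_eq_empty_iff.mpr (not_nonempty_iff.mp h), measure_empty] at h1
    exact one_ne_zero h1.symm
  obtain ⟨y⟩ := hX
  have hK0 : 0 ≤ κ1 - κ0 := by
    have h := hκbdd y y; exact sub_nonneg.mpr (le_trans h.1 h.2)
  have hf0 : 0 ≤ f1 - f0 := by
    have h := hfbdd y; exact sub_nonneg.mpr (le_trans h.1 h.2)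
  have hL0 : 0 ≤ 2 * (κ1 - κ0) + (f1 - f0) := by linarith
  have hnpos : ∀ i : Fin m, (0 : ℝ) < (n i : ℝ) := fun i => by
    exact_mod_cast Nat.lt_of_lt_of_le Nat.zero_lt_one (hn i)
  set ΔL := 2 * (κ1 - κ0) + (f1 - f0) with hΔL
  set D : Fin m → Fin m → ℝ := fun i j =>
    (fpop P f i + fpop P f j) / 2 + Kpop P κ i j
      - (fhat f n x i + fhat f n x j) / 2 - Khat κ n x i j with hD
  set B : Fin m → ℝ := fun i =>
    ΔL * Real.sqrt (c / (2 * (n i : ℝ))) + (κ1 - κ0) / (n i : ℝ) with hB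
  -- pointwise bound D i j ≤ (B i + B j)/2
  have hDB : ∀ i j, D i j ≤ (B i + B j) / 2 := by
    intro i j
    simp only [hD, hB]
    rcases eq_or_ne i j with rfl | hne
    · have h := hdiag i
      linarith
    · have h := hoff i j hne
      have hKn : ∀ k : Fin m, 0 ≤ (κ1 - κ0) / (n k : ℝ) := fun k =>
        div_nonneg hK0 (hnpos k).le
      have hsq : ΔL * Real.sqrt (c / 8 * ((n i : ℝ)⁻¹ + (n j : ℝ)⁻¹)) ≤
          (ΔL * Real.sqrt (c / (2 * (n i : ℝ))) + ΔL * Real.sqrt (c / (2 * (n j : ℝ)))) / 2 := by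
        rcases le_or_gt 0 c with hcn | hcn
        · have h1 : Real.sqrt (c / 8 * ((n i : ℝ)⁻¹ + (n j : ℝ)⁻¹)) ≤
              Real.sqrt (c / 8 * (n i : ℝ)⁻¹) + Real.sqrt (c / 8 * (n j : ℝ)⁻¹) := by
            rw [mul_add]
            exact sqrt_add_le' (by positivity) (by positivity)
          rw [quarter_sqrt hcn (hnpos i), quarter_sqrt hcn (hnpos j)] at h1
          have := mul_le_mul_of_nonneg_left h1 hL0
          linarith
        · have e1 : Real.sqrt (c / 8 * ((n i : ℝ)⁻¹ + (n j : ℝ)⁻¹)) = 0 := by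
            apply Real.sqrt_eq_zero_of_nonpos
            have hi := hnpos i
            have hj := hnpos j
            have : 0 < (n i : ℝ)⁻¹ + (n j : ℝ)⁻¹ := by positivity
            nlinarith
          have e2 : Real.sqrt (c / (2 * (n i : ℝ))) = 0 := by
            apply Real.sqrt_eq_zero_of_nonpos
            have := hnpos i
            apply div_nonpos_of_nonpos_of_nonneg hcn.le (by positivity)
          have e3 : Real.sqrt (c / (2 * (n j : ℝ))) = 0 := by
            apply Real.sqrt_eq_zero_of_nonpos
            apply div_nonpos_of_nonpos_of_nonneg hcn.le (by positivity)
          rw [e1, e2, e3]; simp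
      linarith [hKn i, hKn j]
  -- algebraic identity for weighted double sums of symmetrized vectors
  have expand : ∀ g : Fin m → ℝ,
      ∑ i, ∑ j, α i * α j * ((g i + g j) / 2) = ∑ i, α i * g i := by
    intro g
    have hrow : ∀ i, ∑ j, α i * α j * ((g i + g j) / 2)
        = α i * g i / 2 + α i / 2 * (∑ j, α j * g j) := by
      intro i
      rw [Finset.sum_congr rfl fun j _ =>
        show α i * α j * ((g i + g j) / 2)
          = (α i * g i / 2) * α j + (α i / 2) * (α j * g j) by ring]
      rw [Finset.sum_add_distrib, ← Finset.mul_sum, ← Finset.mul_sum, hα1, mul_one]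
    rw [Finset.sum_congr rfl fun i _ => hrow i, Finset.sum_add_distrib]
    have h2 : ∑ i, α i / 2 * (∑ j, α j * g j) = (∑ j, α j * g j) / 2 := by
      rw [← Finset.sum_mul, ← Finset.sum_div, hα1]; ring
    have h3 : ∑ i, α i * g i / 2 = (∑ i, α i * g i) / 2 := by rw [← Finset.sum_div]
    rw [h2, h3]; ring
  -- key identity
  have key : Lpop P κ f α - Lhat κ f n α x = ∑ i, ∑ j, α i * α j * D i j := by
    have h1 : ∀ i j, α i * α j * D i j
        = α i * α j * Kpop P κ i j - α i * α j * Khat κ n x i j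
          + α i * α j * (((fpop P f i - fhat f n x i) + (fpop P f j - fhat f n x j)) / 2) := by
      intro i j; simp only [hD]; ring
    have h2 : ∑ i, ∑ j, α i * α j * D i j
        = (∑ i, ∑ j, α i * α j * Kpop P κ i j) - (∑ i, ∑ j, α i * α j * Khat κ n x i j)
          + ∑ i, α i * (fpop P f i - fhat f n x i) := by
      rw [← expand (fun i => fpop P f i - fhat f n x i)]
      rw [Finset.sum_congr rfl fun i _ => Finset.sum_congr rfl fun j _ => h1 i j]
      rw [Finset.sum_congr rfl fun i _ => Finset.sum_add_distrib,
        Finset.sum_congr rfl fun i _ => congrArg (· + _) (Finset.sum_sub_distrib (s := Finset.univ) _ _),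
        Finset.sum_add_distrib, Finset.sum_sub_distrib]
    rw [h2]
    simp only [Lpop, Lhat, mul_sub, Finset.sum_sub_distrib]
    ring
  rw [key]
  calc ∑ i, ∑ j, α i * α j * D i j
      ≤ ∑ i, ∑ j, α i * α j * ((B i + B j) / 2) := by
        refine Finset.sum_le_sum fun i _ => Finset.sum_le_sum fun j _ => ?_
        exact mul_le_mul_of_nonneg_left (hDB i j) (mul_nonneg (hα0 i) (hα0 j))
    _ = ∑ i, α i * B i := expand B
    _ = ∑ i, B i * α i := by simp [mul_comm]
end
end

section
/- Let m ≥ 1 and let n_1,…,n_m be positive integers with ∑_{i=1}^m n_i = T, where T ≥ 2m. Define ψ(n) := ∑_{k=1}^{n} k^{-1/2} (with ψ(0) = 0). Then ∑_{i=1}^m ψ(n_i − 1) ≤ m ( 2√(T/m − 1) − 1 ). -/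
open Finset

lemma psi_le_aux (n : ℕ) (hn : 1 ≤ n) :
    ∑ k ∈ Finset.Icc 1 n, ((k : ℝ)) ^ (-(1 : ℝ) / 2) ≤ 2 * Real.sqrt n - 1 := by
  induction n with
  | zero => omega
  | succ n ih =>
    rcases Nat.eq_or_lt_of_le hn with h | h
    · simp only [← h]
      norm_num [Real.rpow_neg_one]
    · have hn1 : 1 ≤ n := by omega
      rw [Finset.sum_Icc_succ_top (by omega)]
      have key : ((n + 1 : ℕ) : ℝ) ^ (-(1 : ℝ) / 2) ≤
          2 * Real.sqrt (n + 1) - 2 * Real.sqrt n := by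
        have hpos : (0 : ℝ) < (n : ℝ) + 1 := by positivity
        have hval : ((n + 1 : ℕ) : ℝ) ^ (-(1 : ℝ) / 2) = (Real.sqrt ((n : ℝ) + 1))⁻¹ := by
          rw [neg_div, Real.rpow_neg (by positivity), Real.sqrt_eq_rpow]
          push_cast
          norm_num
        rw [hval]
        have hu := Real.sq_sqrt hpos.le
        have hv := Real.sq_sqrt (Nat.cast_nonneg n : (0:ℝ) ≤ n)
        have h1 : Real.sqrt ((n:ℝ)) ≤ Real.sqrt ((n:ℝ)+1) := Real.sqrt_le_sqrt (by linarith)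
        have h2 : (0:ℝ) < Real.sqrt ((n:ℝ)+1) := Real.sqrt_pos.mpr hpos
        rw [inv_le_iff_one_le_mul₀ h2] at *
        nlinarith [Real.sqrt_nonneg ((n:ℝ))]
      have ihh := ih hn1
      have : Real.sqrt ((n:ℝ)+1) = Real.sqrt ((n+1 : ℕ) : ℝ) := by push_cast; ring_nf
      push_cast at *
      linarith

lemma sqrt_key (s m A : ℝ) (hs : 0 ≤ s) (hsm : s ≤ m) (hmA : m ≤ A) (hApos : 0 < A) :
    2 * Real.sqrt (s * A) - s ≤ 2 * Real.sqrt (m * A) - m := by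
  have hu2 : Real.sqrt (s * A) ^ 2 = s * A := Real.sq_sqrt (mul_nonneg hs hApos.le)
  have hv2 : Real.sqrt (m * A) ^ 2 = m * A := Real.sq_sqrt (mul_nonneg (hs.trans hsm) hApos.le)
  set u := Real.sqrt (s * A)
  set v := Real.sqrt (m * A)
  have hu0 : 0 ≤ u := Real.sqrt_nonneg _
  have huv : u ≤ v := by
    apply Real.sqrt_le_sqrt
    exact mul_le_mul_of_nonneg_right hsm hApos.le
  have hvA : v ≤ A := by
    have : Real.sqrt (m * A) ≤ Real.sqrt (A * A) := by
      apply Real.sqrt_le_sqrt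
      nlinarith
    simpa [Real.sqrt_mul_self hApos.le] using this
  nlinarith [mul_nonneg (sub_nonneg.2 huv) (sub_nonneg.2 hvA),
    mul_nonneg (sub_nonneg.2 huv) hu0]

/-- With `ψ(n) = ∑_{k=1}^n k^{-1/2}`, if `n_1,…,n_m ≥ 1` sum to `T ≥ 2m`, then
`∑_i ψ(n_i − 1) ≤ m (2√(T/m − 1) − 1)`. -/
theorem sum_psi_le
    {m : ℕ} (hm : 1 ≤ m) (n : Fin m → ℕ) (hn : ∀ i, 1 ≤ n i)
    (T : ℕ) (hsum : ∑ i, n i = T) (hT : 2 * m ≤ T) :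
    ∑ i, (∑ k ∈ Finset.Icc 1 (n i - 1), ((k : ℝ)) ^ (-(1 : ℝ) / 2)) ≤
      (m : ℝ) * (2 * Real.sqrt ((T : ℝ) / (m : ℝ) - 1) - 1) := by
  classical
  set S : Finset (Fin m) := Finset.univ.filter (fun i => 2 ≤ n i) with hS
  -- the sum restricts to S
  have hsplit : ∑ i, (∑ k ∈ Finset.Icc 1 (n i - 1), ((k : ℝ)) ^ (-(1 : ℝ) / 2)) =
      ∑ i ∈ S, (∑ k ∈ Finset.Icc 1 (n i - 1), ((k : ℝ)) ^ (-(1 : ℝ) / 2)) := by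
    rw [← Finset.sum_filter_add_sum_filter_not Finset.univ (fun i => 2 ≤ n i)]
    have : ∑ i ∈ Finset.univ.filter (fun i => ¬ 2 ≤ n i),
        (∑ k ∈ Finset.Icc 1 (n i - 1), ((k : ℝ)) ^ (-(1 : ℝ) / 2)) = 0 := by
      apply Finset.sum_eq_zero
      intro i hi
      simp only [Finset.mem_filter] at hi
      have : n i - 1 = 0 := by have := hn i; omega
      simp [this]
    rw [this, add_zero]
  rw [hsplit]
  -- pointwise bound on S
  have hpt : ∀ i ∈ S, (∑ k ∈ Finset.Icc 1 (n i - 1), ((k : ℝ)) ^ (-(1 : ℝ) / 2)) ≤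
      2 * Real.sqrt ((n i : ℝ) - 1) - 1 := by
    intro i hi
    simp only [hS, Finset.mem_filter] at hi
    have h1 : 1 ≤ n i - 1 := by omega
    have := psi_le_aux (n i - 1) h1
    have hc : ((n i - 1 : ℕ) : ℝ) = (n i : ℝ) - 1 := by
      have := hn i; push_cast [Nat.cast_sub this]; ring
    rwa [hc] at this
  have step1 := Finset.sum_le_sum hpt
  -- Cauchy–Schwarz
  set s : ℕ := S.card with hs
  set B : ℝ := ∑ i ∈ S, ((n i : ℝ) - 1) with hB
  have hBnn : ∀ i ∈ S, (0:ℝ) ≤ (n i : ℝ) - 1 := by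
    intro i _; have := hn i
    have : (1:ℝ) ≤ (n i : ℝ) := by exact_mod_cast this
    linarith
  have hCS : (∑ i ∈ S, Real.sqrt ((n i : ℝ) - 1)) ^ 2 ≤ (s : ℝ) * B := by
    have := sq_sum_le_card_mul_sum_sq (s := S) (f := fun i => Real.sqrt ((n i : ℝ) - 1))
    have heq : ∑ i ∈ S, Real.sqrt ((n i : ℝ) - 1) ^ 2 = B := by
      apply Finset.sum_congr rfl
      intro i hi
      exact Real.sq_sqrt (hBnn i hi)
    rw [heq] at this
    exact_mod_cast this
  have hBnn' : (0:ℝ) ≤ B := Finset.sum_nonneg hBnn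
  have hsqrt_sum : ∑ i ∈ S, Real.sqrt ((n i : ℝ) - 1) ≤ Real.sqrt ((s : ℝ) * B) := by
    rw [Real.le_sqrt (Finset.sum_nonneg fun i _ => Real.sqrt_nonneg _) (by positivity)]
    exact hCS
  -- bound total
  have hsum_split : ∑ i ∈ S, (2 * Real.sqrt ((n i : ℝ) - 1) - 1) =
      2 * ∑ i ∈ S, Real.sqrt ((n i : ℝ) - 1) - s := by
    rw [Finset.sum_sub_distrib, ← Finset.mul_sum]
    simp [hs]
  -- key quantities
  have hsm : s ≤ m := by
    have := Finset.card_filter_le Finset.univ (fun i => 2 ≤ n i)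
    simpa [hs, hS] using this
  have hA : B ≤ (T : ℝ) - m := by
    have : B ≤ ∑ i : Fin m, ((n i : ℝ) - 1) := by
      apply Finset.sum_le_sum_of_subset_of_nonneg (Finset.filter_subset _ _)
      intro i _ _
      have := hn i
      have : (1:ℝ) ≤ (n i : ℝ) := by exact_mod_cast this
      linarith
    calc B ≤ ∑ i : Fin m, ((n i : ℝ) - 1) := this
    _ = (T : ℝ) - m := by
        rw [Finset.sum_sub_distrib]
        simp [← hsum]
  have hAm : (m : ℝ) ≤ (T : ℝ) - m := by
    have : (2 * m : ℝ) ≤ T := by exact_mod_cast hT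
    linarith
  have hm' : (1:ℝ) ≤ (m:ℝ) := by exact_mod_cast hm
  set A : ℝ := (T : ℝ) - m with hAdef
  -- RHS equals 2 * sqrt (m * A) - m
  have hRHS : (m : ℝ) * (2 * Real.sqrt ((T : ℝ) / (m : ℝ) - 1) - 1) =
      2 * Real.sqrt ((m : ℝ) * A) - m := by
    have hmpos : (0:ℝ) < m := by linarith
    have h1 : (T : ℝ) / (m : ℝ) - 1 = A / m := by
      field_simp
      rw [hAdef]
    rw [h1]
    have h2 : (m : ℝ) * Real.sqrt (A / m) = Real.sqrt ((m:ℝ) * A) := by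
      rw [show (m:ℝ) * A = (m:ℝ)^2 * (A / m) by field_simp,
        Real.sqrt_mul (by positivity), Real.sqrt_sq hmpos.le]
    rw [← h2]
    ring
  rw [hRHS]
  -- chain of inequalities
  have hApos : (0:ℝ) < A := by linarith
  have hs_le_A : (s : ℝ) ≤ A := by
    have : (s:ℝ) ≤ (m:ℝ) := by exact_mod_cast hsm
    linarith
  have hBA : (s : ℝ) * B ≤ (s : ℝ) * A := by
    apply mul_le_mul_of_nonneg_left hA (by positivity)
  have key : 2 * Real.sqrt ((s:ℝ) * A) - s ≤ 2 * Real.sqrt ((m:ℝ) * A) - m :=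
    sqrt_key (s:ℝ) (m:ℝ) A (by positivity) (by exact_mod_cast hsm) hAm hApos
  calc ∑ i ∈ S, (∑ k ∈ Finset.Icc 1 (n i - 1), ((k : ℝ)) ^ (-(1 : ℝ) / 2))
      ≤ ∑ i ∈ S, (2 * Real.sqrt ((n i : ℝ) - 1) - 1) := step1
    _ = 2 * ∑ i ∈ S, Real.sqrt ((n i : ℝ) - 1) - s := hsum_split
    _ ≤ 2 * Real.sqrt ((s : ℝ) * B) - s := by linarith
    _ ≤ 2 * Real.sqrt ((s : ℝ) * A) - s := by
        have := Real.sqrt_le_sqrt hBA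
        linarith
    _ ≤ 2 * Real.sqrt ((m:ℝ) * A) - m := key
end
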